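/- arXiv:2205.12510 — 12 statements merged into one kernel-verified Lean document; each statement's English description precedes it below -/
import Mathlib

section
/- Suppose in addition that for every γ ∈ [0, ∞) the infimum defining L(γ) is attained by some w ∈ ℝⁿ. Then L(γ) = inf_{w∈ℝⁿ} (ℓ₀(w) + γ‖w‖²) is continuous on [0, ∞); in particular, an L²-regularized loss has no zeroth-order phase transition in the regularization strength for any finite-dimensional parameter space. -/
/-- If for every γ ≥ 0 the infimum defining L(γ) = inf_w (ℓ₀(w) + γ‖w‖²)
is attained, then L is continuous on [0, ∞): no zeroth-order phase transition in the
regularization strength. -/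
theorem regularized_loss_continuous {n : ℕ}
    (ℓ₀ : (Fin n → ℝ) → ℝ) (hbdd : BddBelow (Set.range ℓ₀))
    (hatt : ∀ γ : ℝ, 0 ≤ γ → ∃ w : Fin n → ℝ,
      ∀ w' : Fin n → ℝ, ℓ₀ w + γ * ∑ i, (w i) ^ 2 ≤ ℓ₀ w' + γ * ∑ i, (w' i) ^ 2) :
    ContinuousOn (fun γ : ℝ => ⨅ w : Fin n → ℝ, (ℓ₀ w + γ * ∑ i, (w i) ^ 2))
      (Set.Ici 0) := by
  obtain ⟨m, hm⟩ := hbdd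
  have hm' : ∀ w, m ≤ ℓ₀ w := fun w => hm (Set.mem_range_self w)
  set S : (Fin n → ℝ) → ℝ := fun w => ∑ i, (w i) ^ 2 with hS
  have hS0 : ∀ w, 0 ≤ S w := fun w => Finset.sum_nonneg fun i _ => sq_nonneg _
  set L : ℝ → ℝ := fun γ => ⨅ w : Fin n → ℝ, (ℓ₀ w + γ * S w) with hLdef
  have hbd : ∀ γ : ℝ, 0 ≤ γ → BddBelow (Set.range fun w => ℓ₀ w + γ * S w) := by
    intro γ hγ
    refine ⟨m, ?_⟩
    rintro x ⟨w, rfl⟩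
    show m ≤ ℓ₀ w + γ * S w
    nlinarith [hm' w, hS0 w]
  have hLle : ∀ γ : ℝ, 0 ≤ γ → ∀ w, L γ ≤ ℓ₀ w + γ * S w := fun γ hγ w =>
    ciInf_le (hbd γ hγ) w
  have hmin : ∀ γ : ℝ, 0 ≤ γ → ∃ w, L γ = ℓ₀ w + γ * S w := by
    intro γ hγ
    obtain ⟨w, hw⟩ := hatt γ hγ
    exact ⟨w, le_antisymm (hLle γ hγ w) (le_ciInf hw)⟩
  have hmL : ∀ γ : ℝ, 0 ≤ γ → m ≤ L γ := by
    intro γ hγ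
    obtain ⟨w, hw⟩ := hmin γ hγ
    rw [hw]
    nlinarith [hm' w, hS0 w]
  have hmono : ∀ γ₁ γ₂ : ℝ, 0 ≤ γ₁ → γ₁ ≤ γ₂ → L γ₁ ≤ L γ₂ := by
    intro γ₁ γ₂ h1 h12
    obtain ⟨w, hw⟩ := hmin γ₂ (h1.trans h12)
    rw [hw]
    calc L γ₁ ≤ ℓ₀ w + γ₁ * S w := hLle γ₁ h1 w
      _ ≤ ℓ₀ w + γ₂ * S w := by nlinarith [hS0 w]
  intro γ₀ hγ₀
  rw [Metric.continuousWithinAt_iff]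
  intro ε hε
  obtain ⟨w₀, hw₀⟩ := hmin γ₀ hγ₀
  rcases eq_or_lt_of_le (show (0:ℝ) ≤ γ₀ from hγ₀) with h0 | hpos
  · -- γ₀ = 0
    refine ⟨ε / (S w₀ + 1), by positivity, ?_⟩
    intro γ hγ hd
    have hγ0 : (0:ℝ) ≤ γ := hγ
    have hγγ₀ : γ₀ ≤ γ := by rw [← h0]; exact hγ0
    have h1 : L γ₀ ≤ L γ := hmono γ₀ γ hγ₀ hγγ₀
    have h2 : L γ ≤ L γ₀ + (γ - γ₀) * S w₀ := by
      have := hLle γ hγ0 w₀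
      rw [hw₀]; linarith [this]
    rw [Real.dist_eq] at hd ⊢
    rw [abs_lt] at hd ⊢
    have hd2 : γ - γ₀ < ε / (S w₀ + 1) := hd.2
    have hK : (γ - γ₀) * S w₀ < ε := by
      have h3 : (γ - γ₀) * S w₀ ≤ (ε / (S w₀ + 1)) * S w₀ := by
        rcases lt_or_ge (γ - γ₀) 0 with h | h
        · nlinarith [hS0 w₀, hε.le]
        · exact mul_le_mul_of_nonneg_right hd2.le (hS0 w₀)
      have h4 : (ε / (S w₀ + 1)) * S w₀ < ε := by
        rw [div_mul_eq_mul_div, div_lt_iff₀ (by positivity)]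
        nlinarith [hS0 w₀]
      linarith
    constructor <;> linarith
  · -- γ₀ > 0
    set K : ℝ := max (S w₀) (2 * (L γ₀ - m) / γ₀) with hK
    have hK0 : 0 ≤ K := le_trans (hS0 w₀) (le_max_left _ _)
    refine ⟨min (γ₀ / 2) (ε / (K + 1)), by positivity, ?_⟩
    intro γ hγ hd
    have hγ0 : (0:ℝ) ≤ γ := hγ
    rw [Real.dist_eq, abs_lt] at hd
    have hd1 : γ₀ - γ < γ₀ / 2 := by
      have := hd.1
      have := min_le_left (γ₀ / 2) (ε / (K + 1))
      linarith
    have hd2 : |γ - γ₀| < ε / (K + 1) := by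
      rw [abs_lt]
      have := min_le_right (γ₀ / 2) (ε / (K + 1))
      constructor <;> [linarith [hd.1]; linarith [hd.2]]
    rw [Real.dist_eq]
    rcases le_or_gt γ₀ γ with hle | hlt
    · -- γ ≥ γ₀
      have h1 : L γ₀ ≤ L γ := hmono γ₀ γ hγ₀ hle
      have h2 : L γ ≤ L γ₀ + (γ - γ₀) * S w₀ := by
        have := hLle γ hγ0 w₀
        rw [hw₀]; linarith [this]
      have hSK : S w₀ ≤ K := le_max_left _ _
      have habs : γ - γ₀ < ε / (K + 1) := (abs_lt.mp hd2).2
      have hstep : (γ - γ₀) * S w₀ < ε := by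
        have : (γ - γ₀) * S w₀ ≤ (ε / (K + 1)) * K := by
          rcases lt_or_ge (γ - γ₀) 0 with h | h
          · nlinarith [hS0 w₀, hε.le, hK0]
          · calc (γ - γ₀) * S w₀ ≤ (ε / (K + 1)) * S w₀ :=
                  mul_le_mul_of_nonneg_right habs.le (hS0 w₀)
              _ ≤ (ε / (K + 1)) * K := by
                  apply mul_le_mul_of_nonneg_left hSK (by positivity)
        have : (ε / (K + 1)) * K < ε := by
          rw [div_mul_eq_mul_div, div_lt_iff₀ (by positivity)]
          nlinarith
        linarith
      rw [abs_lt]; constructor <;> linarith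
    · -- γ < γ₀
      have hγhalf : γ₀ / 2 < γ := by linarith
      have hγpos : 0 < γ := by linarith
      obtain ⟨wγ, hwγ⟩ := hmin γ hγ0
      have h1 : L γ ≤ L γ₀ := hmono γ γ₀ hγ0 hlt.le
      have h2 : L γ₀ ≤ L γ + (γ₀ - γ) * S wγ := by
        have := hLle γ₀ hγ₀ wγ
        rw [hwγ]; linarith [this]
      -- bound on S wγ
      have hSb : γ * S wγ ≤ L γ₀ - m := by
        have hmw : m ≤ ℓ₀ wγ := hm' wγ
        have : ℓ₀ wγ + γ * S wγ ≤ L γ₀ := by rw [← hwγ]; exact h1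
        linarith
      have hSK : S wγ ≤ K := by
        have h3 : S wγ ≤ 2 * (L γ₀ - m) / γ₀ := by
          rw [le_div_iff₀ hpos]
          nlinarith [hS0 wγ]
        exact le_trans h3 (le_max_right _ _)
      have habs : γ₀ - γ < ε / (K + 1) := by
        have := (abs_lt.mp hd2).1; linarith
      have hstep : (γ₀ - γ) * S wγ < ε := by
        have hle1 : (γ₀ - γ) * S wγ ≤ (ε / (K + 1)) * K := by
          calc (γ₀ - γ) * S wγ ≤ (ε / (K + 1)) * S wγ :=
                mul_le_mul_of_nonneg_right habs.le (hS0 wγ)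
            _ ≤ (ε / (K + 1)) * K := by
                apply mul_le_mul_of_nonneg_left hSK (by positivity)
        have : (ε / (K + 1)) * K < ε := by
          rw [div_mul_eq_mul_div, div_lt_iff₀ (by positivity)]
          nlinarith
        linarith
      rw [abs_lt]; constructor <;> linarith
end

section
/- Let γ₀ > 0 and suppose b : (γ₀−ε, γ₀+ε) → ℝ is differentiable with b(γ) a global minimizer of ℓ̄_D(·, γ) for every γ in this interval. Then γ ↦ ℓ̄_D(b(γ), γ) is differentiable at γ₀ with derivative equal to Σ_{i=1}^n d₀^{2D} b(γ₀)^{2D} v_i² / (d₀^D (σ²+d₀)^D a_i b(γ₀)^{2D} + γ₀)² + D d₀² b(γ₀)², which is nonnegative. -/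
/-- The depth-`D` effective loss
ℓ̄_D(b, γ) = −Σᵢ d₀^{2D} b^{2D} vᵢ² / (d₀^D (σ²+d₀)^D aᵢ b^{2D} + γ) + c + γ D d₀² b². -/
noncomputable def effLoss {n : ℕ} (d₀ : ℕ) (σ : ℝ) (v a : Fin n → ℝ) (c : ℝ)
    (D : ℕ) (b γ : ℝ) : ℝ :=
  -∑ i, (d₀ : ℝ) ^ (2 * D) * b ^ (2 * D) * (v i) ^ 2 /
      ((d₀ : ℝ) ^ D * (σ ^ 2 + (d₀ : ℝ)) ^ D * a i * b ^ (2 * D) + γ)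
    + c + γ * (D : ℝ) * (d₀ : ℝ) ^ 2 * b ^ 2

/-- if b(γ) is a differentiable curve of global minimizers of the depth-D
effective loss near γ₀ > 0, then γ ↦ ℓ̄_D(b(γ), γ) is differentiable at γ₀ with the stated
nonnegative derivative (envelope theorem / Lemma 1). -/
theorem effLoss_envelope_derivative {n : ℕ} (d₀ : ℕ) (hd₀ : 0 < d₀) (σ : ℝ) (hσ : 0 ≤ σ)
    (v a : Fin n → ℝ) (ha : ∀ i, 0 ≤ a i) (c : ℝ) (D : ℕ) (hD : 1 ≤ D)
    (γ₀ ε : ℝ) (hγ₀ : 0 < γ₀) (hε : 0 < ε)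
    (b : ℝ → ℝ)
    (hdiff : ∀ γ ∈ Set.Ioo (γ₀ - ε) (γ₀ + ε), DifferentiableAt ℝ b γ)
    (hmin : ∀ γ ∈ Set.Ioo (γ₀ - ε) (γ₀ + ε), ∀ b' : ℝ,
      effLoss d₀ σ v a c D (b γ) γ ≤ effLoss d₀ σ v a c D b' γ) :
    HasDerivAt (fun γ => effLoss d₀ σ v a c D (b γ) γ)
      (∑ i, (d₀ : ℝ) ^ (2 * D) * (b γ₀) ^ (2 * D) * (v i) ^ 2 /
          ((d₀ : ℝ) ^ D * (σ ^ 2 + (d₀ : ℝ)) ^ D * a i * (b γ₀) ^ (2 * D) + γ₀) ^ 2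
        + (D : ℝ) * (d₀ : ℝ) ^ 2 * (b γ₀) ^ 2) γ₀ ∧
    0 ≤ ∑ i, (d₀ : ℝ) ^ (2 * D) * (b γ₀) ^ (2 * D) * (v i) ^ 2 /
          ((d₀ : ℝ) ^ D * (σ ^ 2 + (d₀ : ℝ)) ^ D * a i * (b γ₀) ^ (2 * D) + γ₀) ^ 2
        + (D : ℝ) * (d₀ : ℝ) ^ 2 * (b γ₀) ^ 2 := by
  set b₀ := b γ₀ with hb₀def
  have hγmem : γ₀ ∈ Set.Ioo (γ₀ - ε) (γ₀ + ε) := ⟨by linarith, by linarith⟩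
  have hbpow : (0:ℝ) ≤ b₀ ^ (2 * D) := by
    rw [mul_comm, pow_mul]
    exact sq_nonneg _
  have hd₀pow : (0:ℝ) ≤ (d₀:ℝ) ^ (2 * D) := pow_nonneg (Nat.cast_nonneg d₀) _
  have hden : ∀ i, 0 < (d₀:ℝ) ^ D * (σ ^ 2 + (d₀:ℝ)) ^ D * a i * b₀ ^ (2 * D) + γ₀ := by
    intro i
    have h1 : (0:ℝ) ≤ (d₀:ℝ) ^ D * (σ ^ 2 + (d₀:ℝ)) ^ D * a i * b₀ ^ (2 * D) := by
      have hA : (0:ℝ) ≤ (d₀:ℝ) ^ D * (σ ^ 2 + (d₀:ℝ)) ^ D * a i := by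
        have h2 : (0:ℝ) ≤ σ ^ 2 + (d₀:ℝ) := by positivity
        exact mul_nonneg (mul_nonneg (pow_nonneg (Nat.cast_nonneg d₀) D)
          (pow_nonneg h2 D)) (ha i)
      exact mul_nonneg hA hbpow
    linarith
  -- the joint function
  set F : ℝ × ℝ → ℝ := fun p => effLoss d₀ σ v a c D p.1 p.2 with hFdef
  have hFdiff : DifferentiableAt ℝ F (b₀, γ₀) := by
    rw [hFdef]
    unfold effLoss
    apply DifferentiableAt.add
    apply DifferentiableAt.add
    · apply DifferentiableAt.neg
      apply DifferentiableAt.fun_sum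
      intro i _
      have h1 : DifferentiableAt ℝ
          (fun y : ℝ × ℝ => (d₀:ℝ) ^ (2 * D) * y.1 ^ (2 * D) * v i ^ 2) (b₀, γ₀) :=
        ((differentiableAt_fst.pow _).const_mul _).mul_const _
      have h2 : DifferentiableAt ℝ
          (fun y : ℝ × ℝ => (d₀:ℝ) ^ D * (σ ^ 2 + (d₀:ℝ)) ^ D * a i * y.1 ^ (2 * D) + y.2)
          (b₀, γ₀) :=
        ((differentiableAt_fst.pow _).const_mul _).add differentiableAt_snd
      have h3 := h1.mul (h2.inv (hden i).ne')
      simp only [div_eq_mul_inv]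
      exact h3
    · exact differentiableAt_const c
    · exact (((differentiableAt_snd.mul_const _).mul_const _)).mul (differentiableAt_fst.pow 2)
  set L := fderiv ℝ F (b₀, γ₀) with hLdef
  have hL : HasFDerivAt F L (b₀, γ₀) := hFdiff.hasFDerivAt
  -- partial derivative in b is zero at the minimizer
  have hcurve1 : HasDerivAt (fun x => F (x, γ₀)) (L (1, 0)) b₀ := by
    have h := hL.comp_hasDerivAt b₀ ((hasDerivAt_id b₀).prodMk (hasDerivAt_const b₀ γ₀))
    exact h
  have hlocmin : IsLocalMin (fun x => F (x, γ₀)) b₀ :=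
    Filter.Eventually.of_forall (fun x => hmin γ₀ hγmem x)
  have hL10 : L (1, 0) = 0 := hlocmin.hasDerivAt_eq_zero hcurve1
  -- partial derivative in γ
  set S : ℝ := ∑ i, (d₀ : ℝ) ^ (2 * D) * b₀ ^ (2 * D) * (v i) ^ 2 /
          ((d₀ : ℝ) ^ D * (σ ^ 2 + (d₀ : ℝ)) ^ D * a i * b₀ ^ (2 * D) + γ₀) ^ 2
        + (D : ℝ) * (d₀ : ℝ) ^ 2 * b₀ ^ 2 with hSdef
  have hγpart : HasDerivAt (fun γ => F (b₀, γ)) S γ₀ := by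
    have hsum : HasDerivAt (fun γ => ∑ i, (d₀ : ℝ) ^ (2 * D) * b₀ ^ (2 * D) * (v i) ^ 2 /
        ((d₀ : ℝ) ^ D * (σ ^ 2 + (d₀ : ℝ)) ^ D * a i * b₀ ^ (2 * D) + γ))
        (∑ i, -((d₀ : ℝ) ^ (2 * D) * b₀ ^ (2 * D) * (v i) ^ 2 /
          ((d₀ : ℝ) ^ D * (σ ^ 2 + (d₀ : ℝ)) ^ D * a i * b₀ ^ (2 * D) + γ₀) ^ 2)) γ₀ := by
      apply HasDerivAt.fun_sum
      intro i _
      have hd : HasDerivAt (fun γ : ℝ =>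
          (d₀ : ℝ) ^ D * (σ ^ 2 + (d₀ : ℝ)) ^ D * a i * b₀ ^ (2 * D) + γ) 1 γ₀ :=
        (hasDerivAt_id γ₀).const_add _
      have h := (hasDerivAt_const γ₀ ((d₀ : ℝ) ^ (2 * D) * b₀ ^ (2 * D) * (v i) ^ 2)).div hd
        (ne_of_gt (hden i))
      refine h.congr_deriv ?_
      field_simp
      ring
    have hlast : HasDerivAt (fun γ : ℝ => γ * (D : ℝ) * (d₀ : ℝ) ^ 2 * b₀ ^ 2)
        ((D : ℝ) * (d₀ : ℝ) ^ 2 * b₀ ^ 2) γ₀ := by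
      have h := (((hasDerivAt_id γ₀).mul_const (D : ℝ)).mul_const ((d₀:ℝ) ^ 2)).mul_const
        (b₀ ^ 2)
      refine h.congr_deriv ?_
      ring
    have h := (hsum.neg.add_const c).add hlast
    refine h.congr_deriv ?_
    simp [hSdef, Finset.sum_neg_distrib]
  have hcurve2 : HasDerivAt (fun γ => F (b₀, γ)) (L (0, 1)) γ₀ := by
    have h := hL.comp_hasDerivAt γ₀ ((hasDerivAt_const γ₀ b₀).prodMk (hasDerivAt_id γ₀))
    exact h
  have hL01 : L (0, 1) = S := (hcurve2.unique hγpart)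
  -- main computation
  have hb : HasDerivAt b (deriv b γ₀) γ₀ := (hdiff γ₀ hγmem).hasDerivAt
  have hL' : HasFDerivAt F L (b γ₀, γ₀) := hL
  have hg : HasDerivAt (fun γ : ℝ => (b γ, γ)) (deriv b γ₀, 1) γ₀ :=
    hb.prodMk (hasDerivAt_id γ₀)
  have hmain : HasDerivAt (fun γ => F (b γ, γ)) (L (deriv b γ₀, 1)) γ₀ :=
    HasFDerivAt.comp_hasDerivAt_of_eq γ₀ hL' hg rfl
  have hval : L (deriv b γ₀, 1) = S := by
    have : (deriv b γ₀, (1:ℝ)) = deriv b γ₀ • ((1:ℝ), (0:ℝ)) + ((0:ℝ), (1:ℝ)) := by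
      simp [Prod.ext_iff]
    rw [this, map_add, map_smul, hL10, hL01]
    simp
  constructor
  · exact hval ▸ hmain
  · rw [hSdef]
    apply add_nonneg
    · apply Finset.sum_nonneg
      intro i _
      apply div_nonneg
      · exact mul_nonneg (mul_nonneg hd₀pow hbpow) (sq_nonneg _)
      · positivity
    · positivity
end

section
/- If γ ≥ ‖v‖, then ℓ̄(b, γ) ≥ c for every b ∈ ℝ, so that L(γ) = c; moreover, if γ > ‖v‖, then ℓ̄(b, γ) > c for every b ≠ 0, so b = 0 is the unique global minimizer of ℓ̄(·, γ). That is, for γ ≥ ‖v‖ the depth-1 model is in the trivial phase. -/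
open Matrix

/-- The depth-1 effective loss
ℓ̄(b, γ) = −d₁ b² vᵀ (b²(σ²+d₁)A₀ + γI)⁻¹ v + c + γ d₁ b². -/
noncomputable def effLoss1 {n : ℕ} (A₀ : Matrix (Fin n) (Fin n) ℝ) (v : Fin n → ℝ)
    (c : ℝ) (d₁ : ℕ) (σ : ℝ) (b γ : ℝ) : ℝ :=
  -(d₁ : ℝ) * b ^ 2 *
      (v ⬝ᵥ (((b ^ 2 * (σ ^ 2 + (d₁ : ℝ))) • A₀ + γ • (1 : Matrix (Fin n) (Fin n) ℝ))⁻¹.mulVec v))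
    + c + γ * (d₁ : ℝ) * b ^ 2

lemma key_bound {n : ℕ} (A₀ : Matrix (Fin n) (Fin n) ℝ) (hA : A₀.PosSemidef)
    (v : Fin n → ℝ) {γ : ℝ} (hγ : 0 < γ) {S : ℝ} (hS : 0 ≤ S) :
    γ * (v ⬝ᵥ ((S • A₀ + γ • (1 : Matrix (Fin n) (Fin n) ℝ))⁻¹.mulVec v)) ≤ v ⬝ᵥ v := by
  set M : Matrix (Fin n) (Fin n) ℝ := S • A₀ + γ • (1 : Matrix (Fin n) (Fin n) ℝ) with hMdef
  have hself : ∀ x : Fin n → ℝ, 0 ≤ x ⬝ᵥ x := fun x =>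
    Finset.sum_nonneg fun i _ => mul_self_nonneg (x i)
  have hSA : (S • A₀).PosSemidef := by
    refine .of_dotProduct_mulVec_nonneg ?_ (fun x => ?_)
    · show (S • A₀)ᴴ = S • A₀
      rw [conjTranspose_smul, star_trivial, hA.1.eq]
    · rw [smul_mulVec, dotProduct_smul, star_trivial, smul_eq_mul]
      exact mul_nonneg hS (by simpa using hA.dotProduct_mulVec_nonneg x)
  have hγ1 : (γ • (1 : Matrix (Fin n) (Fin n) ℝ)).PosDef := by
    refine .of_dotProduct_mulVec_pos ?_ (fun x hx => ?_)
    · show (γ • (1 : Matrix (Fin n) (Fin n) ℝ))ᴴ = γ • 1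
      rw [conjTranspose_smul, star_trivial, conjTranspose_one]
    · rw [smul_mulVec, one_mulVec, dotProduct_smul, star_trivial, smul_eq_mul]
      have hxx : 0 < x ⬝ᵥ x := by
        rcases (hself x).lt_or_eq with h | h
        · exact h
        · exact absurd ((dotProduct_self_eq_zero).mp h.symm) hx
      exact mul_pos hγ hxx
  have hM : M.PosDef := Matrix.PosDef.posSemidef_add hSA hγ1
  have hdet : IsUnit M.det := hM.det_pos.ne'.isUnit
  set w : Fin n → ℝ := M⁻¹.mulVec v with hw
  have hMw : M.mulVec w = v := by
    rw [hw, mulVec_mulVec, Matrix.mul_nonsing_inv M hdet, one_mulVec]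
  set t : ℝ := v ⬝ᵥ w with ht
  have h1 : γ * (w ⬝ᵥ w) ≤ t := by
    have : t = w ⬝ᵥ M.mulVec w := by rw [ht, ← hMw, dotProduct_comm, hMw]
    have hterm : 0 ≤ w ⬝ᵥ (S • A₀) *ᵥ w := by simpa using hSA.dotProduct_mulVec_nonneg w
    have h2' : w ⬝ᵥ (γ • (1 : Matrix (Fin n) (Fin n) ℝ)) *ᵥ w = γ * (w ⬝ᵥ w) := by
      rw [smul_mulVec, one_mulVec, dotProduct_smul, smul_eq_mul]
    rw [this, hMdef, add_mulVec, dotProduct_add, h2']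
    linarith
  have h2 : t ^ 2 ≤ (v ⬝ᵥ v) * (w ⬝ᵥ w) := by
    have := Finset.sum_mul_sq_le_sq_mul_sq Finset.univ v w
    simpa [ht, dotProduct, sq] using this
  have hV : 0 ≤ v ⬝ᵥ v := hself v
  have ha : 0 ≤ w ⬝ᵥ w := hself w
  have ht0 : 0 ≤ t := le_trans (mul_nonneg hγ.le ha) h1
  rcases ht0.lt_or_eq with h | h
  · nlinarith
  · rw [← h, mul_zero]; exact hV

/-- if γ ≥ ‖v‖ then ℓ̄(b, γ) ≥ c for all b, so L(γ) = c; and if γ > ‖v‖,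
then ℓ̄(b, γ) > c for all b ≠ 0, so b = 0 is the unique global minimizer (trivial phase). -/
theorem depth_one_trivial_phase {n : ℕ} (hn : 1 ≤ n)
    (A₀ : Matrix (Fin n) (Fin n) ℝ) (hA : A₀.PosSemidef)
    (v : Fin n → ℝ) (c : ℝ) (d₁ : ℕ) (hd₁ : 0 < d₁) (σ : ℝ) (hσ : 0 ≤ σ)
    (γ : ℝ) (hγ : 0 < γ) (hγv : Real.sqrt (v ⬝ᵥ v) ≤ γ) :
    (∀ b : ℝ, c ≤ effLoss1 A₀ v c d₁ σ b γ) ∧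
    (⨅ b : ℝ, effLoss1 A₀ v c d₁ σ b γ) = c ∧
    (Real.sqrt (v ⬝ᵥ v) < γ → ∀ b : ℝ, b ≠ 0 → c < effLoss1 A₀ v c d₁ σ b γ) := by
  have hV : 0 ≤ v ⬝ᵥ v :=
    Finset.sum_nonneg fun i _ => mul_self_nonneg (v i)
  have hVγ : v ⬝ᵥ v ≤ γ ^ 2 := by
    have := Real.sqrt_le_sqrt (le_of_eq (Real.sqrt_sq hγ.le).symm) -- dummy
    nlinarith [Real.sq_sqrt hV, Real.sqrt_nonneg (v ⬝ᵥ v)]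
  have key : ∀ b : ℝ, γ - (v ⬝ᵥ (((b ^ 2 * (σ ^ 2 + (d₁ : ℝ))) • A₀ +
      γ • (1 : Matrix (Fin n) (Fin n) ℝ))⁻¹.mulVec v)) ≥ (γ ^ 2 - v ⬝ᵥ v) / γ := by
    intro b
    have hS : 0 ≤ b ^ 2 * (σ ^ 2 + (d₁ : ℝ)) := by positivity
    have := key_bound A₀ hA v hγ hS
    rw [ge_iff_le, div_le_iff₀ hγ]
    nlinarith
  have hd₁' : (0 : ℝ) < (d₁ : ℝ) := by exact_mod_cast hd₁
  have h1 : ∀ b : ℝ, c ≤ effLoss1 A₀ v c d₁ σ b γ := by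
    intro b
    have := key b
    have hdiv : 0 ≤ (γ ^ 2 - v ⬝ᵥ v) / γ := div_nonneg (by linarith) hγ.le
    unfold effLoss1
    nlinarith [sq_nonneg b, mul_nonneg (mul_nonneg hd₁'.le (sq_nonneg b)) (le_trans hdiv this)]
  refine ⟨h1, ?_, ?_⟩
  · have h0 : effLoss1 A₀ v c d₁ σ 0 γ = c := by simp [effLoss1]
    refine le_antisymm ?_ (le_ciInf h1)
    calc (⨅ b : ℝ, effLoss1 A₀ v c d₁ σ b γ) ≤ effLoss1 A₀ v c d₁ σ 0 γ :=
          ciInf_le ⟨c, by rintro _ ⟨b, rfl⟩; exact h1 b⟩ 0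
      _ = c := h0
  · intro hlt b hb
    have hVγ' : v ⬝ᵥ v < γ ^ 2 := by
      nlinarith [Real.sq_sqrt hV, Real.sqrt_nonneg (v ⬝ᵥ v)]
    have := key b
    have hdiv : 0 < (γ ^ 2 - v ⬝ᵥ v) / γ := div_pos (by linarith) hγ
    have hb2 : 0 < b ^ 2 := by positivity
    unfold effLoss1
    nlinarith [mul_pos (mul_pos hd₁' hb2) (lt_of_lt_of_le hdiv this)]
end

section
/- Suppose v ≠ 0 and vᵀA₀v > 0. For each γ with 0 < γ < ‖v‖, let b_*(γ) ≥ 0 be any global minimizer of ℓ̄(·, γ). Then as γ → ‖v‖ from the left, b_*(γ)² / (‖v‖ − γ) converges to ‖v‖² / ((σ² + d₁) vᵀA₀v); in particular, the order parameter vanishes at the critical point with the Landau critical exponent 1/2, b_*(γ) ∼ (‖v‖ − γ)^{1/2}. -/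
open Matrix

section MatrixAux
variable {n : ℕ}

lemma dot_self_nonneg (x : Fin n → ℝ) : 0 ≤ x ⬝ᵥ x :=
  Finset.sum_nonneg fun _ _ => mul_self_nonneg _

lemma dot_self_pos {x : Fin n → ℝ} (hx : x ≠ 0) : 0 < x ⬝ᵥ x := by
  rcases (dot_self_nonneg x).lt_or_eq with h | h
  · exact h
  · exact absurd (by simpa using (dotProduct_self_eq_zero).mp h.symm) hx

lemma transpose_eq_of_herm {A : Matrix (Fin n) (Fin n) ℝ} (h : A.IsHermitian) : Aᵀ = A := by
  rw [← Matrix.conjTranspose_eq_transpose_of_trivial]; exact h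

lemma dot_shift {B : Matrix (Fin n) (Fin n) ℝ} (hB : Bᵀ = B) (x y : Fin n → ℝ) :
    x ⬝ᵥ B *ᵥ y = (B *ᵥ x) ⬝ᵥ y := by
  rw [Matrix.dotProduct_mulVec, ← Matrix.mulVec_transpose, hB]

variable {A : Matrix (Fin n) (Fin n) ℝ} {s γ : ℝ}

lemma M_posDef (hA : A.PosSemidef) (hs : 0 ≤ s) (hγ : 0 < γ) :
    (s • A + γ • (1 : Matrix (Fin n) (Fin n) ℝ)).PosDef := by
  rw [Matrix.posDef_iff_dotProduct_mulVec]
  constructor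
  · unfold Matrix.IsHermitian
    simp [Matrix.conjTranspose_add, Matrix.conjTranspose_smul, hA.1.eq,
      transpose_eq_of_herm hA.1]
  · intro x hx
    have h1 : 0 ≤ x ⬝ᵥ A *ᵥ x := by simpa using hA.dotProduct_mulVec_nonneg x
    have h2 : 0 < x ⬝ᵥ x := dot_self_pos hx
    have : (s • A + γ • (1 : Matrix (Fin n) (Fin n) ℝ)) *ᵥ x = s • (A *ᵥ x) + γ • x := by
      simp [Matrix.add_mulVec, Matrix.smul_mulVec]
    rw [this]
    simp only [star_trivial, dotProduct_add, dotProduct_smul, smul_eq_mul]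
    nlinarith

lemma M_mul_inv (hA : A.PosSemidef) (hs : 0 ≤ s) (hγ : 0 < γ) :
    (s • A + γ • (1 : Matrix (Fin n) (Fin n) ℝ)) * (s • A + γ • 1)⁻¹ = 1 :=
  Matrix.mul_nonsing_inv _ (M_posDef hA hs hγ).det_pos.ne'.isUnit

lemma M_inv_mul (hA : A.PosSemidef) (hs : 0 ≤ s) (hγ : 0 < γ) :
    (s • A + γ • (1 : Matrix (Fin n) (Fin n) ℝ))⁻¹ * (s • A + γ • 1) = 1 :=
  Matrix.nonsing_inv_mul _ (M_posDef hA hs hγ).det_pos.ne'.isUnit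

lemma Minv_symm (hA : A.PosSemidef) (hs : 0 ≤ s) (hγ : 0 < γ) :
    ((s • A + γ • (1 : Matrix (Fin n) (Fin n) ℝ))⁻¹)ᵀ = (s • A + γ • 1)⁻¹ :=
  transpose_eq_of_herm (M_posDef hA hs hγ).inv.1

lemma A_comm_Minv (hA : A.PosSemidef) (hs : 0 ≤ s) (hγ : 0 < γ) :
    A * (s • A + γ • (1 : Matrix (Fin n) (Fin n) ℝ))⁻¹ = (s • A + γ • 1)⁻¹ * A := by
  set M := s • A + γ • (1 : Matrix (Fin n) (Fin n) ℝ) with hM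
  have hcomm : A * M = M * A := by
    rw [hM]; simp [Matrix.mul_add, Matrix.add_mul, Matrix.mul_smul, Matrix.smul_mul]
  have key : M⁻¹ * A * M = A := by
    have h2 : M⁻¹ * (A * M) = M⁻¹ * (M * A) := by rw [hcomm]
    rw [← Matrix.mul_assoc, ← Matrix.mul_assoc, M_inv_mul hA hs hγ, Matrix.one_mul] at h2
    exact h2
  calc A * M⁻¹ = (M⁻¹ * A * M) * M⁻¹ := by rw [key]
    _ = M⁻¹ * A * (M * M⁻¹) := by rw [Matrix.mul_assoc]
    _ = M⁻¹ * A := by rw [M_mul_inv hA hs hγ, Matrix.mul_one]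

lemma resolvent_step (hA : A.PosSemidef) (hs : 0 ≤ s) (hγ : 0 < γ) (x y : Fin n → ℝ) :
    γ * (x ⬝ᵥ (s • A + γ • (1 : Matrix (Fin n) (Fin n) ℝ))⁻¹ *ᵥ y)
      = x ⬝ᵥ y - s * (x ⬝ᵥ (A * (s • A + γ • 1)⁻¹) *ᵥ y) := by
  set M := s • A + γ • (1 : Matrix (Fin n) (Fin n) ℝ) with hM
  have h1 : s • (A * M⁻¹) + γ • M⁻¹ = 1 := by
    have := M_mul_inv hA hs hγ
    rw [← hM] at this
    calc s • (A * M⁻¹) + γ • M⁻¹ = (s • A + γ • 1) * M⁻¹ := by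
          rw [Matrix.add_mul, Matrix.smul_mul, Matrix.smul_mul, Matrix.one_mul]
      _ = 1 := by rw [← hM]; exact this
  have h2 : (s • (A * M⁻¹) + γ • M⁻¹) *ᵥ y = y := by rw [h1, Matrix.one_mulVec]
  have h3 : s • ((A * M⁻¹) *ᵥ y) + γ • (M⁻¹ *ᵥ y) = y := by
    rw [← Matrix.smul_mulVec, ← Matrix.smul_mulVec, ← Matrix.add_mulVec]
    exact h2
  have h4 := congrArg (fun z => x ⬝ᵥ z) h3
  simp only [dotProduct_add, dotProduct_smul, smul_eq_mul] at h4
  linarith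

lemma inv_quad_le (hA : A.PosSemidef) (hs : 0 ≤ s) (hγ : 0 < γ) (x : Fin n → ℝ) :
    γ * (x ⬝ᵥ (s • A + γ • (1 : Matrix (Fin n) (Fin n) ℝ))⁻¹ *ᵥ x) ≤ x ⬝ᵥ x := by
  set M := s • A + γ • (1 : Matrix (Fin n) (Fin n) ℝ) with hM
  set y := M⁻¹ *ᵥ x with hy
  have hx' : M *ᵥ y = x := by
    rw [hy, Matrix.mulVec_mulVec, M_mul_inv hA hs hγ, Matrix.one_mulVec]
  have hp0 : 0 ≤ x ⬝ᵥ y := by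
    have := (M_posDef hA hs hγ).inv.posSemidef.dotProduct_mulVec_nonneg x
    simpa [hy] using this
  have hAyy : 0 ≤ (A *ᵥ y) ⬝ᵥ y := by
    rw [dotProduct_comm]
    simpa using hA.dotProduct_mulVec_nonneg y
  have hp : x ⬝ᵥ y = s * ((A *ᵥ y) ⬝ᵥ y) + γ * (y ⬝ᵥ y) := by
    conv_lhs => rw [← hx']
    rw [hM, Matrix.add_mulVec, Matrix.smul_mulVec, Matrix.smul_mulVec,
      Matrix.one_mulVec, add_dotProduct, smul_dotProduct,
      smul_dotProduct]
    simp [smul_eq_mul]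
  have hcs : (x ⬝ᵥ y) ^ 2 ≤ (x ⬝ᵥ x) * (y ⬝ᵥ y) := by
    have := Finset.sum_mul_sq_le_sq_mul_sq Finset.univ x y
    simpa [dotProduct, pow_two] using this
  have hX : 0 ≤ x ⬝ᵥ x := dot_self_nonneg x
  have hY : 0 ≤ y ⬝ᵥ y := dot_self_nonneg y
  have key : γ * (y ⬝ᵥ y) ≤ x ⬝ᵥ y := by nlinarith
  rcases hp0.lt_or_eq with hpos | hzero
  · nlinarith
  · rw [← hzero]; linarith

lemma form_nonneg (hA : A.PosSemidef) (hs : 0 ≤ s) (hγ : 0 < γ) (x : Fin n → ℝ) :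
    0 ≤ x ⬝ᵥ (A * (s • A + γ • (1 : Matrix (Fin n) (Fin n) ℝ))⁻¹) *ᵥ x := by
  set M := s • A + γ • (1 : Matrix (Fin n) (Fin n) ℝ) with hM
  set y := M⁻¹ *ᵥ x with hy
  have hx' : M *ᵥ y = x := by
    rw [hy, Matrix.mulVec_mulVec, M_mul_inv hA hs hγ, Matrix.one_mulVec]
  have h1 : x ⬝ᵥ (A * M⁻¹) *ᵥ x = x ⬝ᵥ A *ᵥ y := by
    rw [← Matrix.mulVec_mulVec, hy]
  rw [h1]
  conv_lhs => rw [← mul_zero 0]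
  have h2 : x ⬝ᵥ A *ᵥ y = s * ((A *ᵥ y) ⬝ᵥ (A *ᵥ y)) + γ * (y ⬝ᵥ A *ᵥ y) := by
    conv_lhs => rw [← hx']
    rw [hM, Matrix.add_mulVec, Matrix.smul_mulVec, Matrix.smul_mulVec,
      Matrix.one_mulVec, add_dotProduct, smul_dotProduct,
      smul_dotProduct]
    simp [smul_eq_mul]
  have h3 : 0 ≤ (A *ᵥ y) ⬝ᵥ (A *ᵥ y) := dot_self_nonneg _
  have h4 : 0 ≤ y ⬝ᵥ A *ᵥ y := by simpa using hA.dotProduct_mulVec_nonneg y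
  simp only [mul_zero]
  rw [h2]; positivity

lemma form_symm (hA : A.PosSemidef) (hs : 0 ≤ s) (hγ : 0 < γ) :
    (A * (s • A + γ • (1 : Matrix (Fin n) (Fin n) ℝ))⁻¹)ᵀ
      = A * (s • A + γ • 1)⁻¹ := by
  rw [Matrix.transpose_mul, Minv_symm hA hs hγ, transpose_eq_of_herm hA.1,
    ← A_comm_Minv hA hs hγ]

lemma cs_form {B : Matrix (Fin n) (Fin n) ℝ} (hBT : Bᵀ = B)
    (hpos : ∀ z : Fin n → ℝ, 0 ≤ z ⬝ᵥ B *ᵥ z) (x y : Fin n → ℝ) :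
    (x ⬝ᵥ B *ᵥ y) ^ 2 ≤ (x ⬝ᵥ B *ᵥ x) * (y ⬝ᵥ B *ᵥ y) := by
  have hsymm : ∀ u w : Fin n → ℝ, u ⬝ᵥ B *ᵥ w = w ⬝ᵥ B *ᵥ u := by
    intro u w
    rw [dot_shift hBT, dotProduct_comm]
  have hquad : ∀ lam : ℝ,
      0 ≤ (y ⬝ᵥ B *ᵥ y) * (lam * lam) + (2 * (x ⬝ᵥ B *ᵥ y)) * lam + (x ⬝ᵥ B *ᵥ x) := by
    intro lam
    have h := hpos (x + lam • y)
    have hexp : (x + lam • y) ⬝ᵥ B *ᵥ (x + lam • y)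
        = (x ⬝ᵥ B *ᵥ x) + lam * (x ⬝ᵥ B *ᵥ y) + lam * (y ⬝ᵥ B *ᵥ x)
          + (lam * lam) * (y ⬝ᵥ B *ᵥ y) := by
      rw [Matrix.mulVec_add, Matrix.mulVec_smul]
      simp only [add_dotProduct, dotProduct_add, smul_dotProduct,
        dotProduct_smul, smul_eq_mul]
      ring
    rw [hexp, hsymm y x] at h
    linarith
  have hd := discrim_le_zero hquad
  rw [discrim] at hd
  nlinarith [hd]

lemma resolvent_bounds (hA : A.PosSemidef) (hs : 0 ≤ s) (hγ : 0 < γ) (v : Fin n → ℝ) :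
    ∃ τ : ℝ,
      γ * (v ⬝ᵥ (s • A + γ • (1 : Matrix (Fin n) (Fin n) ℝ))⁻¹ *ᵥ v) = v ⬝ᵥ v - s * τ
      ∧ γ * τ ≤ v ⬝ᵥ A *ᵥ v
      ∧ γ * (v ⬝ᵥ A *ᵥ v) - s * ((A *ᵥ v) ⬝ᵥ (A *ᵥ v)) ≤ γ * (γ * τ)
      ∧ (v ⬝ᵥ A *ᵥ v) ^ 2 ≤ τ * (s * ((A *ᵥ v) ⬝ᵥ (A *ᵥ v)) + γ * (v ⬝ᵥ A *ᵥ v)) := by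
  set M := s • A + γ • (1 : Matrix (Fin n) (Fin n) ℝ) with hM
  set a := A *ᵥ v with ha
  have hAT : Aᵀ = A := transpose_eq_of_herm hA.1
  have hcomm : A * M⁻¹ = M⁻¹ * A := by rw [hM]; exact A_comm_Minv hA hs hγ
  have htau : v ⬝ᵥ (A * M⁻¹) *ᵥ v = a ⬝ᵥ M⁻¹ *ᵥ v := by
    rw [← Matrix.mulVec_mulVec, dot_shift hAT, ha]
  have hstep2 : γ * (a ⬝ᵥ M⁻¹ *ᵥ v) = a ⬝ᵥ v - s * (a ⬝ᵥ (A * M⁻¹) *ᵥ v) := by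
    rw [hM]; exact resolvent_step hA hs hγ a v
  have hav : a ⬝ᵥ v = v ⬝ᵥ A *ᵥ v := by rw [ha, dotProduct_comm]
  have hwrw : a ⬝ᵥ (A * M⁻¹) *ᵥ v = a ⬝ᵥ M⁻¹ *ᵥ a := by
    rw [hcomm, ← Matrix.mulVec_mulVec, ← ha]
  have hw0 : 0 ≤ a ⬝ᵥ M⁻¹ *ᵥ a := by
    have h := (M_posDef hA hs hγ).inv.posSemidef.dotProduct_mulVec_nonneg a
    rw [← hM] at h
    simpa using h
  have hwle : γ * (a ⬝ᵥ M⁻¹ *ᵥ a) ≤ a ⬝ᵥ a := by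
    have h := inv_quad_le hA hs hγ a
    rw [← hM] at h
    exact h
  have htau_eq : γ * (v ⬝ᵥ (A * M⁻¹) *ᵥ v) = v ⬝ᵥ A *ᵥ v - s * (a ⬝ᵥ M⁻¹ *ᵥ a) := by
    rw [htau, hstep2, hav, hwrw]
  refine ⟨v ⬝ᵥ (A * M⁻¹) *ᵥ v, by rw [hM]; exact resolvent_step hA hs hγ v v, ?_, ?_, ?_⟩
  · nlinarith [mul_nonneg hs hw0]
  · nlinarith [mul_le_mul_of_nonneg_left hwle hs]
  · have hsymmB : (A * M⁻¹)ᵀ = A * M⁻¹ := by rw [hM]; exact form_symm hA hs hγ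
    have hposB : ∀ z : Fin n → ℝ, 0 ≤ z ⬝ᵥ (A * M⁻¹) *ᵥ z := by
      intro z
      have h := form_nonneg hA hs hγ z
      rw [← hM] at h
      exact h
    have hcs := cs_form hsymmB hposB v (M *ᵥ v)
    have hBy : (A * M⁻¹) *ᵥ (M *ᵥ v) = a := by
      rw [Matrix.mulVec_mulVec, Matrix.mul_assoc]
      have : M⁻¹ * M = 1 := by rw [hM]; exact M_inv_mul hA hs hγ
      rw [this, Matrix.mul_one, ha]
    have hMv : M *ᵥ v = s • a + γ • v := by
      rw [hM, Matrix.add_mulVec, Matrix.smul_mulVec, Matrix.smul_mulVec,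
        Matrix.one_mulVec, ha]
    have h1 : v ⬝ᵥ (A * M⁻¹) *ᵥ (M *ᵥ v) = v ⬝ᵥ a := by rw [hBy]
    have h2 : (M *ᵥ v) ⬝ᵥ (A * M⁻¹) *ᵥ (M *ᵥ v)
        = s * (a ⬝ᵥ a) + γ * (v ⬝ᵥ a) := by
      rw [hBy]
      nth_rewrite 1 [hMv]
      rw [add_dotProduct, smul_dotProduct, smul_dotProduct]
      simp [smul_eq_mul]
    rw [h1, h2] at hcs
    exact hcs

end MatrixAux


/-- as γ → ‖v‖⁻, any nonnegative global minimizer b_*(γ) of the depth-1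
effective loss satisfies b_*(γ)²/(‖v‖ − γ) → ‖v‖²/((σ²+d₁) vᵀA₀v): the order parameter
vanishes with the Landau critical exponent 1/2. -/
theorem depth_one_critical_exponent {n : ℕ} (hn : 1 ≤ n)
    (A₀ : Matrix (Fin n) (Fin n) ℝ) (hA : A₀.PosSemidef)
    (v : Fin n → ℝ) (hv : v ≠ 0) (hvA : 0 < v ⬝ᵥ A₀.mulVec v)
    (c : ℝ) (d₁ : ℕ) (hd₁ : 0 < d₁) (σ : ℝ) (hσ : 0 ≤ σ)
    (bstar : ℝ → ℝ)
    (hbstar : ∀ γ ∈ Set.Ioo (0 : ℝ) (Real.sqrt (v ⬝ᵥ v)),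
      0 ≤ bstar γ ∧ ∀ b : ℝ, effLoss1 A₀ v c d₁ σ (bstar γ) γ ≤ effLoss1 A₀ v c d₁ σ b γ) :
    Filter.Tendsto (fun γ => (bstar γ) ^ 2 / (Real.sqrt (v ⬝ᵥ v) - γ))
      (nhdsWithin (Real.sqrt (v ⬝ᵥ v)) (Set.Iio (Real.sqrt (v ⬝ᵥ v))))
      (nhds ((v ⬝ᵥ v) / ((σ ^ 2 + (d₁ : ℝ)) * (v ⬝ᵥ A₀.mulVec v)))) := by
  classical
  have hAv : A₀.mulVec v ≠ 0 := by
    intro h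
    rw [h] at hvA
    simp at hvA
  set S0 := v ⬝ᵥ v with hS0def
  set S1 := v ⬝ᵥ A₀ *ᵥ v with hS1def
  set S2 := (A₀ *ᵥ v) ⬝ᵥ (A₀ *ᵥ v) with hS2def
  set r := Real.sqrt S0 with hrdef
  set m := σ ^ 2 + (d₁ : ℝ) with hmdef
  have hS0 : 0 < S0 := dot_self_pos hv
  have hr : 0 < r := Real.sqrt_pos.mpr hS0
  have hr2 : r ^ 2 = S0 := Real.sq_sqrt hS0.le
  have hS1 : 0 < S1 := hvA
  have hS2 : 0 < S2 := dot_self_pos hAv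
  have hd : (0:ℝ) < (d₁ : ℝ) := Nat.cast_pos.mpr hd₁
  have hm : 0 < m := by rw [hmdef]; nlinarith [sq_nonneg σ]
  set K := Real.sqrt (64 * S2 * r^5 / (m^2 * S1^4)) with hKdef
  have hK0 : 0 ≤ K := Real.sqrt_nonneg _
  have hK2 : K^2 = 64 * S2 * r^5 / (m^2 * S1^4) := by
    rw [hKdef]; exact Real.sq_sqrt (by positivity)
  set δ := min (r/2) (S1^2/(8*r*S2)) with hδdef
  have hδpos : 0 < δ := lt_min (by positivity) (by positivity)
  have hδ1 : δ ≤ r/2 := min_le_left _ _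
  have hδ2 : δ ≤ S1^2/(8*r*S2) := min_le_right _ _
  clear_value S0 S1 S2 r K δ m
  have hE : ∀ γ ∈ Set.Ioo (r - δ) r,
      |(bstar γ)^2/(r-γ) - (r+γ)*γ/(2*m*S1)|
        ≤ K*((r+γ)/γ)*Real.sqrt ((S0-γ^2)/γ) := by
    rintro γ ⟨hγ1, hγ2⟩
    have hγpos : 0 < γ := by linarith
    obtain ⟨hb0, hbmin⟩ := hbstar γ ⟨hγpos, hγ2⟩
    have hloss : ∀ b : ℝ, effLoss1 A₀ v c d₁ σ b γ
        = c + (d₁:ℝ) * (b^2 * (γ - v ⬝ᵥ ((b^2 * m) • A₀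
            + γ • (1 : Matrix (Fin n) (Fin n) ℝ))⁻¹ *ᵥ v)) := by
      intro b
      rw [hmdef]
      simp only [effLoss1]
      ring
    have hgmin : ∀ u : ℝ, 0 ≤ u →
        (bstar γ ^2) * (γ - v ⬝ᵥ ((bstar γ ^2 * m) • A₀
            + γ • (1 : Matrix (Fin n) (Fin n) ℝ))⁻¹ *ᵥ v)
          ≤ u * (γ - v ⬝ᵥ ((u * m) • A₀ + γ • (1 : Matrix (Fin n) (Fin n) ℝ))⁻¹ *ᵥ v) := by
      intro u hu
      have h := hbmin (Real.sqrt u)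
      rw [hloss (bstar γ), hloss (Real.sqrt u), Real.sq_sqrt hu] at h
      exact (mul_le_mul_iff_right₀ hd).mp (by linarith)
    have key : ∀ u : ℝ, 0 ≤ u →
        (γ*S0 - u*m*S1 ≤ γ * (γ * (v ⬝ᵥ ((u*m) • A₀
            + γ • (1 : Matrix (Fin n) (Fin n) ℝ))⁻¹ *ᵥ v)))
        ∧ (γ^2 * (γ * (v ⬝ᵥ ((u*m) • A₀
            + γ • (1 : Matrix (Fin n) (Fin n) ℝ))⁻¹ *ᵥ v))
            ≤ γ^2*S0 - u*m*γ*S1 + (u*m)^2*S2)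
        ∧ ((u*m*S2 + γ*S1) * (γ * (v ⬝ᵥ ((u*m) • A₀
            + γ • (1 : Matrix (Fin n) (Fin n) ℝ))⁻¹ *ᵥ v))
            ≤ (u*m*S2 + γ*S1)*S0 - u*m*S1^2) := by
      intro u hu
      obtain ⟨τ, e, h1, h2, h3⟩ := resolvent_bounds (s := u*m) hA (mul_nonneg hu hm.le) hγpos v
      simp only [← hS0def, ← hS1def, ← hS2def] at e h1 h2 h3
      refine ⟨?_, ?_, ?_⟩
      · rw [e]; nlinarith only [mul_nonneg (mul_nonneg hu hm.le) (sub_nonneg.mpr h1)]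
      · rw [e]; nlinarith only [mul_nonneg (mul_nonneg hu hm.le) (sub_nonneg.mpr h2)]
      · rw [e]; nlinarith only [mul_nonneg (mul_nonneg hu hm.le) (sub_nonneg.mpr h3)]
    -- scalar set-up
    set t := bstar γ ^ 2 with htdef
    have ht0 : 0 ≤ t := by rw [htdef]; positivity
    set ε := (S0 - γ^2)/γ with hεdef0
    have hγ2r : γ^2 < S0 := by nlinarith only [hr2, hγ2, hγpos, hr]
    have hε : 0 < ε := div_pos (by linarith) hγpos
    have hεγ : γ * ε = S0 - γ^2 := by rw [hεdef0]; field_simp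
    set t₀ := ε*γ^2/(2*m*S1) with ht₀def0
    have ht₀pos : 0 < t₀ := by
      rw [ht₀def0]
      exact div_pos (mul_pos hε (pow_pos hγpos 2))
        (mul_pos (mul_pos (by norm_num) hm) hS1)
    have ht₀eq : 2*m*S1*t₀ = ε*γ^2 := by
      rw [ht₀def0]
      field_simp
    clear_value t ε t₀
    obtain ⟨k1t, k2t, k3t⟩ := key t ht0
    obtain ⟨k1t0, k2t0, k3t0⟩ := key t₀ ht₀pos.le
    have hgmin0 := hgmin t₀ ht₀pos.le
    set Qt := v ⬝ᵥ ((t * m) • A₀ + γ • (1 : Matrix (Fin n) (Fin n) ℝ))⁻¹ *ᵥ v with hQtdef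
    set Qt₀ := v ⬝ᵥ ((t₀ * m) • A₀ + γ • (1 : Matrix (Fin n) (Fin n) ℝ))⁻¹ *ᵥ v with hQt₀def
    clear_value Qt Qt₀
    clear key hgmin hloss hbmin hbstar
    -- step 1 : value at t₀ is quantitatively negative
    have hεγ2 : γ^2*ε = γ*S0 - γ^3 := by linear_combination γ*hεγ
    have step1 : γ - Qt₀ ≤ -(ε/2) := by
      nlinarith only [k1t0, hεγ2, ht₀eq, mul_pos hγpos hγpos, hγpos]
    have hg_t₀ : t₀*(γ - Qt₀) ≤ t₀ * (-(ε/2)) :=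
      mul_le_mul_of_nonneg_left step1 ht₀pos.le
    -- smallness of ε from the choice of δ
    have hδ2' : δ*(8*r*S2) ≤ S1^2 := (le_div_iff₀ (by positivity)).mp hδ2
    have hεsm1 : γ*ε ≤ δ*(2*r) := by
      have hp := mul_le_mul (le_of_lt (by linarith : r - γ < δ))
        (by linarith : r + γ ≤ 2*r) (by linarith) hδpos.le
      nlinarith only [hεγ, hr2, hp]
    have hεsmall : ε*γ*S2 ≤ S1^2/2 := by
      nlinarith only [mul_le_mul_of_nonneg_right hεsm1 hS2.le, hδ2', hS2, hr, hδpos]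
    -- step 2 : a-priori bound t ≤ 4 t₀
    have step2 : t ≤ 4*t₀ := by
      by_contra hcon
      push_neg at hcon
      have htm : 0 ≤ t*m := mul_nonneg ht0 hm.le
      have hD : 0 < t*m*S2 + γ*S1 := by
        have := mul_pos hγpos hS1
        nlinarith only [this, mul_nonneg htm hS2.le]
      have e1 : 2*ε*γ^2 ≤ t*m*S1 := by
        nlinarith only [ht₀eq, hcon, mul_pos hm hS1]
      have e2 : (t*m*S2 + γ*S1)*(γ*ε) ≤ t*m*S1^2 := by
        nlinarith only [mul_le_mul_of_nonneg_left hεsmall htm,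
          mul_le_mul_of_nonneg_right e1 hS1.le, hγpos, hε, hS1]
      have hεγD : (t*m*S2+γ*S1)*(γ*ε) = (t*m*S2+γ*S1)*(S0-γ^2) := by rw [hεγ]
      have e3 : (t*m*S2+γ*S1)*(γ*Qt) ≤ (t*m*S2+γ*S1)*γ^2 := by
        nlinarith only [k3t, e2, hεγD]
      have hQtle : Qt ≤ γ := by
        nlinarith only [e3, mul_pos hD hγpos]
      have hgt : 0 ≤ t*(γ - Qt) := mul_nonneg ht0 (by linarith)
      nlinarith only [hgt, hgmin0, hg_t₀, mul_pos ht₀pos hε]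
    -- step 3 : the quadratic estimate
    have HGL : t*γ^4 - (γ^2*S0)*t + t^2*m*γ*S1 - t^3*m^2*S2 ≤ γ^3*(t*(γ-Qt)) := by
      nlinarith only [mul_le_mul_of_nonneg_left k2t ht0]
    have HGU : γ^3*(t*(γ-Qt)) ≤ γ^3*(t₀*(-(ε/2))) := by
      have h := le_trans hgmin0 hg_t₀
      exact mul_le_mul_of_nonneg_left h (by positivity)
    have Hq : m*S1*γ*(t-t₀)^2 ≤ m^2*S2*t^3 := by
      have e1 : 2*(m*S1*γ*(t*t₀)) = ε*γ^3*t := by linear_combination (γ*t)*ht₀eq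
      have e2 : 2*(m*S1*γ*(t₀*t₀)) = ε*γ^3*t₀ := by linear_combination (γ*t₀)*ht₀eq
      have e3 : γ^3*ε*t = γ^2*S0*t - γ^4*t := by linear_combination (γ^2*t)*hεγ
      nlinarith only [HGL, HGU, e1, e2, e3]
    have Hcube : t^3 ≤ 64*t₀^3 := by
      nlinarith only [pow_le_pow_left₀ ht0 step2 3]
    have Hfin : (t-t₀)^2 ≤ K^2 * ε^3 := by
      have e4 : (2*m*S1*t₀)^3 = (ε*γ^2)^3 := by rw [ht₀eq]
      have p1 := mul_le_mul_of_nonneg_left Hq (by positivity : (0:ℝ) ≤ m*S1^3)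
      have p2 := mul_le_mul_of_nonneg_left Hcube
        (by positivity : (0:ℝ) ≤ m^3*S1^3*S2)
      have e5 : S2*(2*m*S1*t₀)^3 = S2*(ε*γ^2)^3 := by rw [ht₀eq]
      have q1 : γ*(m^2*S1^4*(t-t₀)^2) ≤ 8*S2*ε^3*γ^6 := by
        nlinarith only [p1, p2, e5]
      have hγ5 : γ^5 ≤ r^5 := pow_le_pow_left₀ hγpos.le hγ2.le 5
      have q2 : 8*S2*ε^3*γ^6 ≤ γ*(8*S2*ε^3*r^5) := by
        nlinarith only [mul_le_mul_of_nonneg_left hγ5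
          (by positivity : (0:ℝ) ≤ 8*S2*ε^3*γ)]
      have q3 : m^2*S1^4*(t-t₀)^2 ≤ 8*S2*ε^3*r^5 :=
        (mul_le_mul_iff_right₀ hγpos).mp (le_trans q1 q2)
      rw [hK2, div_mul_eq_mul_div, le_div_iff₀ (by positivity)]
      nlinarith only [q3, hε, hS2, hr, mul_pos (mul_pos hS2 (pow_pos hr 5)) (pow_pos hε 3)]
    have habs : |t - t₀| ≤ K*(ε*Real.sqrt ε) := by
      have hsq : Real.sqrt ε ^ 2 = ε := Real.sq_sqrt hε.le
      have h2 : (K*(ε*Real.sqrt ε))^2 = K^2*ε^3 := by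
        rw [mul_pow, mul_pow, hsq]; ring
      rw [← Real.sqrt_sq_eq_abs]
      have hKε : 0 ≤ K*(ε*Real.sqrt ε) :=
        mul_nonneg hK0 (mul_nonneg hε.le (Real.sqrt_nonneg _))
      calc Real.sqrt ((t-t₀)^2) ≤ Real.sqrt ((K*(ε*Real.sqrt ε))^2) :=
            Real.sqrt_le_sqrt (by rw [h2]; exact Hfin)
        _ = K*(ε*Real.sqrt ε) := Real.sqrt_sq hKε
    -- final per-γ bound
    have hrγ : 0 < r - γ := by linarith
    have ht₀r : t₀*(2*m*S1) = (r-γ)*((r+γ)*γ) := by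
      linear_combination ht₀eq + γ*hεγ - γ*hr2
    have h2mS1 : (2*m*S1) ≠ 0 := by positivity
    have hval : (r+γ)*γ/(2*m*S1) = t₀/(r-γ) := by
      rw [eq_div_iff hrγ.ne', div_mul_eq_mul_div, div_eq_iff h2mS1]
      linear_combination -ht₀r
    have hsplit : t/(r-γ) - (r+γ)*γ/(2*m*S1) = (t - t₀)/(r-γ) := by
      rw [hval, div_sub_div_same]
    have hεrγ : ε*γ = (r+γ)*(r-γ) := by linear_combination hεγ - hr2
    have hEeq : K*((r+γ)/γ)*Real.sqrt ε = (K*(ε*Real.sqrt ε))/(r-γ) := by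
      have hfrac : (r+γ)/γ = ε/(r-γ) := by
        rw [div_eq_div_iff hγpos.ne' hrγ.ne']
        linear_combination -hεrγ
      rw [hfrac]; ring
    rw [hsplit, hEeq, abs_div, abs_of_pos hrγ]
    exact div_le_div_of_nonneg_right habs hrγ.le
  -- squeeze argument
  have hIoo : Set.Ioo (r-δ) r ∈ nhdsWithin r (Set.Iio r) :=
    Ioo_mem_nhdsLT_of_mem ⟨by linarith, le_refl r⟩
  have hlo : ∀ᶠ γ in nhdsWithin r (Set.Iio r),
      (r+γ)*γ/(2*m*S1) - K*((r+γ)/γ)*Real.sqrt ((S0-γ^2)/γ) ≤ (bstar γ)^2/(r-γ) := by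
    filter_upwards [hIoo] with γ hγ
    have h := abs_le.mp (hE γ hγ)
    linarith [h.1]
  have hhi : ∀ᶠ γ in nhdsWithin r (Set.Iio r),
      (bstar γ)^2/(r-γ) ≤ (r+γ)*γ/(2*m*S1) + K*((r+γ)/γ)*Real.sqrt ((S0-γ^2)/γ) := by
    filter_upwards [hIoo] with γ hγ
    have h := abs_le.mp (hE γ hγ)
    linarith [h.2]
  have Th : Filter.Tendsto (fun γ : ℝ => (r+γ)*γ/(2*m*S1)) (nhds r)
      (nhds (S0/(m*S1))) := by
    have hc : Continuous fun γ : ℝ => (r+γ)*γ/(2*m*S1) :=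
      ((continuous_const.add continuous_id).mul continuous_id).div_const _
    have h := hc.tendsto r
    have hval : (r+r)*r/(2*m*S1) = S0/(m*S1) := by
      rw [← hr2, div_eq_div_iff (by positivity) (by positivity)]
      ring
    rwa [hval] at h
  have TE : Filter.Tendsto (fun γ : ℝ => K*((r+γ)/γ)*Real.sqrt ((S0-γ^2)/γ))
      (nhds r) (nhds 0) := by
    have T1 : Filter.Tendsto (fun γ : ℝ => (S0-γ^2)/γ) (nhds r) (nhds 0) := by
      have hc : ContinuousAt (fun γ : ℝ => (S0-γ^2)/γ) r :=
        ContinuousAt.div (continuous_const.sub (continuous_pow 2)).continuousAt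
          continuousAt_id hr.ne'
      have h := hc.tendsto
      have hval : (S0 - r^2)/r = 0 := by rw [hr2]; simp
      rwa [hval] at h
    have T2 : Filter.Tendsto (fun γ : ℝ => Real.sqrt ((S0-γ^2)/γ)) (nhds r)
        (nhds 0) := by
      have h := (Real.continuous_sqrt.continuousAt (x := (0:ℝ))).tendsto.comp T1
      simpa [Function.comp_def] using h
    have T3 : Filter.Tendsto (fun γ : ℝ => K*((r+γ)/γ)) (nhds r)
        (nhds (K*((r+r)/r))) :=
      (continuousAt_const.mul
        (((continuous_const.add continuous_id).continuousAt).div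
          continuousAt_id hr.ne')).tendsto
    have h := T3.mul T2
    simpa using h
  have Tlow : Filter.Tendsto
      (fun γ : ℝ => (r+γ)*γ/(2*m*S1) - K*((r+γ)/γ)*Real.sqrt ((S0-γ^2)/γ))
      (nhdsWithin r (Set.Iio r)) (nhds (S0/(m*S1))) := by
    have h := (Th.mono_left (nhdsWithin_le_nhds : nhdsWithin r (Set.Iio r) ≤ nhds r)).sub
      (TE.mono_left (nhdsWithin_le_nhds : nhdsWithin r (Set.Iio r) ≤ nhds r))
    simpa using h
  have Thigh : Filter.Tendsto
      (fun γ : ℝ => (r+γ)*γ/(2*m*S1) + K*((r+γ)/γ)*Real.sqrt ((S0-γ^2)/γ))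
      (nhdsWithin r (Set.Iio r)) (nhds (S0/(m*S1))) := by
    have h := (Th.mono_left (nhdsWithin_le_nhds : nhdsWithin r (Set.Iio r) ≤ nhds r)).add
      (TE.mono_left (nhdsWithin_le_nhds : nhdsWithin r (Set.Iio r) ≤ nhds r))
    simpa using h
  exact tendsto_of_tendsto_of_tendsto_of_le_of_le' Tlow Thigh hlo hhi
end

section
/- Suppose v ≠ 0 and vᵀA₀v > 0. Then L is differentiable at the critical point γ = ‖v‖ with L′(‖v‖) = 0; in particular, the first derivative of the optimal depth-1 loss is continuous at the transition, so the transition is not first order. -/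
open Matrix

section helpers
variable {n : ℕ}





lemma dot_nonneg {A : Matrix (Fin n) (Fin n) ℝ} (hA : A.PosSemidef) (x : Fin n → ℝ) :
    0 ≤ x ⬝ᵥ A.mulVec x := by simpa using hA.dotProduct_mulVec_nonneg x

lemma sym_dot {A : Matrix (Fin n) (Fin n) ℝ} (hA : A.IsHermitian) (x y : Fin n → ℝ) :
    x ⬝ᵥ A.mulVec y = (A.mulVec x) ⬝ᵥ y := by
  have ht : Aᵀ = A := by rw [← conjTranspose_eq_transpose_of_trivial]; exact hA
  rw [Matrix.dotProduct_mulVec, ← Matrix.mulVec_transpose, ht]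

lemma frob_bound (B : Matrix (Fin n) (Fin n) ℝ) (x : Fin n → ℝ) :
    (B.mulVec x) ⬝ᵥ (B.mulVec x) ≤ (∑ i, ∑ j, B i j ^ 2) * (x ⬝ᵥ x) := by
  simp only [dotProduct, Matrix.mulVec]
  rw [Finset.sum_mul]
  refine Finset.sum_le_sum fun i _ => ?_
  have h := Finset.sum_mul_sq_le_sq_mul_sq Finset.univ (fun j => B i j) x
  calc (∑ j, B i j * x j) * (∑ j, B i j * x j)
      = (∑ j, B i j * x j) ^ 2 := by rw [sq]
    _ ≤ (∑ j, B i j ^ 2) * ∑ j, x j ^ 2 := h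
    _ = (∑ j, B i j ^ 2) * ∑ k, x k * x k := by
        congr 1; exact Finset.sum_congr rfl fun k _ => sq (x k)

lemma trace_sq {C : Matrix (Fin n) (Fin n) ℝ} (hC : C.IsHermitian) :
    (C * C).trace = ∑ i, ∑ j, C i j ^ 2 := by
  have ht : ∀ i j, C j i = C i j := fun i j => by
    have := congrFun (congrFun hC.symm j) i
    simpa [conjTranspose_apply] using this
  simp only [Matrix.trace, Matrix.diag, Matrix.mul_apply]
  exact Finset.sum_congr rfl fun i _ => Finset.sum_congr rfl fun j _ => by rw [ht i j, sq]

section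
open scoped MatrixOrder
lemma herm_sqrt_exists {A : Matrix (Fin n) (Fin n) ℝ} (hA : A.PosSemidef) :
    ∃ C : Matrix (Fin n) (Fin n) ℝ, C.IsHermitian ∧ C * C = A := by
  obtain ⟨X, hX, -, hXX⟩ := CFC.exists_sqrt_of_isSelfAdjoint_of_quasispectrumRestricts
    hA.nonneg.isSelfAdjoint (QuasispectrumRestricts.nnreal_of_nonneg hA.nonneg)
  exact ⟨X, hX, hXX⟩
end

lemma quad_le_trace {A : Matrix (Fin n) (Fin n) ℝ} (hA : A.PosSemidef) (x : Fin n → ℝ) :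
    x ⬝ᵥ A.mulVec x ≤ A.trace * (x ⬝ᵥ x) := by
  obtain ⟨C, hCh, hCC⟩ := herm_sqrt_exists hA
  calc x ⬝ᵥ A.mulVec x = x ⬝ᵥ C.mulVec (C.mulVec x) := by rw [Matrix.mulVec_mulVec, hCC]
    _ = (C.mulVec x) ⬝ᵥ (C.mulVec x) := sym_dot hCh x _
    _ ≤ (∑ i, ∑ j, C i j ^ 2) * (x ⬝ᵥ x) := frob_bound C x
    _ = A.trace * (x ⬝ᵥ x) := by rw [← trace_sq hCh, hCC]

lemma sq_quad_le_trace {A : Matrix (Fin n) (Fin n) ℝ} (hA : A.PosSemidef) (x : Fin n → ℝ) :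
    (A.mulVec x) ⬝ᵥ (A.mulVec x) ≤ A.trace * (x ⬝ᵥ A.mulVec x) := by
  obtain ⟨C, hCh, hCC⟩ := herm_sqrt_exists hA
  set y := C.mulVec x with hy
  have hAx : A.mulVec x = C.mulVec y := by rw [hy, Matrix.mulVec_mulVec, hCC]
  have hxy : x ⬝ᵥ A.mulVec x = y ⬝ᵥ y := by
    rw [← hCC, ← Matrix.mulVec_mulVec, sym_dot hCh x]
  calc (A.mulVec x) ⬝ᵥ (A.mulVec x) = (C.mulVec y) ⬝ᵥ (C.mulVec y) := by rw [hAx]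
    _ = y ⬝ᵥ C.mulVec (C.mulVec y) := (sym_dot hCh y _).symm
    _ = y ⬝ᵥ A.mulVec y := by rw [Matrix.mulVec_mulVec, hCC]
    _ ≤ A.trace * (y ⬝ᵥ y) := quad_le_trace hA y
    _ = A.trace * (x ⬝ᵥ A.mulVec x) := by rw [hxy]

lemma scalar_key {γ s a t e P q : ℝ} (hγ : 0 < γ) (hs : 0 < s) (ha : 0 < a) (ht : 0 ≤ t)
    (hq : 0 ≤ q) (hP : 0 < P) (hqP : P ≤ q * (γ + t * s * a)) (he : e ≤ P / (2 * a)) :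
    -(e ^ 2 / (2 * s * P)) ≤ t * (t * s * q - e) / γ := by
  rw [← neg_div, div_le_div_iff₀ (by positivity) hγ, neg_mul]
  rcases le_or_gt (t * s * a) γ with hcase | hcase
  · have h2 : P ≤ 2 * γ * q := by nlinarith
    nlinarith [sq_nonneg (s * P * t - γ * e), hγ, mul_pos hs hP,
      mul_nonneg (mul_nonneg (mul_nonneg ht ht) hs.le) (sub_nonneg.mpr h2)]
  · have hts : 0 < t * s := by
      rcases le_or_gt (t * s) 0 with h | h
      · exfalso; nlinarith
      · exact h
    have h2 : P ≤ 2 * (t * s * a) * q := by nlinarith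
    have h3 : 0 ≤ t * s * q - e := by
      have h4 : e * (2 * a) ≤ P := (le_div_iff₀ (by positivity)).mp he
      nlinarith
    have ht' : 0 < t := by nlinarith
    nlinarith [mul_nonneg (mul_nonneg ht'.le h3) (by positivity : (0:ℝ) ≤ 2 * s * P),
      mul_nonneg (sq_nonneg e) hγ.le]



lemma eff_lower (A₀ : Matrix (Fin n) (Fin n) ℝ) (hA : A₀.PosSemidef)
    (v : Fin n → ℝ) (hvA : 0 < v ⬝ᵥ A₀.mulVec v) (c : ℝ) (d₁ : ℕ) (hd₁ : 0 < d₁) (σ : ℝ)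
    {γ : ℝ} (hγ : 0 < γ)
    (he : v ⬝ᵥ v - γ ^ 2 ≤ (v ⬝ᵥ A₀.mulVec v) / (2 * A₀.trace)) (b : ℝ) :
    c - (d₁ : ℝ) * ((v ⬝ᵥ v - γ ^ 2) ^ 2 / (2 * (σ ^ 2 + (d₁ : ℝ)) * (v ⬝ᵥ A₀.mulVec v)))
      ≤ effLoss1 A₀ v c d₁ σ b γ := by
  classical
  set P := v ⬝ᵥ A₀.mulVec v with hPdef
  set a := A₀.trace with hadef
  have hv0 : v ≠ 0 := by
    rintro rfl; rw [hPdef] at hvA; simpa using hvA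
  have hN : 0 < v ⬝ᵥ v := dot_self_pos hv0
  have ha : 0 < a := by
    have := quad_le_trace hA v
    nlinarith
  set s : ℝ := σ ^ 2 + (d₁ : ℝ) with hsdef
  have hs : 0 < s := by
    have : (1 : ℝ) ≤ (d₁ : ℝ) := by exact_mod_cast hd₁
    positivity
  set t : ℝ := b ^ 2 with htdef
  have ht : 0 ≤ t := sq_nonneg b
  set M : Matrix (Fin n) (Fin n) ℝ :=
    (b ^ 2 * (σ ^ 2 + (d₁ : ℝ))) • A₀ + γ • (1 : Matrix (Fin n) (Fin n) ℝ) with hMdef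
  have hsm : ∀ (k : ℝ) (B : Matrix (Fin n) (Fin n) ℝ), B.IsHermitian → (k • B).IsHermitian := by
    intro k B hB
    rw [Matrix.IsHermitian, Matrix.conjTranspose_smul, star_trivial, hB.eq]
  have hMpsd : M.PosDef := by
    refine Matrix.PosDef.of_dotProduct_mulVec_pos ?_ ?_
    · exact ((hsm _ _ hA.1).add (hsm _ _ Matrix.isHermitian_one))
    · intro x hx
      have h1 : 0 ≤ x ⬝ᵥ A₀.mulVec x := dot_nonneg hA x
      have h2 : 0 < x ⬝ᵥ x := dot_self_pos hx
      have hexp : star x ⬝ᵥ M.mulVec x = (b ^ 2 * s) * (x ⬝ᵥ A₀.mulVec x) + γ * (x ⬝ᵥ x) := by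
        simp [hMdef, Matrix.add_mulVec, Matrix.smul_mulVec, Matrix.one_mulVec,
          dotProduct_add, dotProduct_smul, smul_eq_mul, hsdef]
      rw [hexp]
      have : 0 ≤ b ^ 2 * s := by positivity
      nlinarith
  have hdet : IsUnit M.det := (Matrix.isUnit_iff_isUnit_det M).mp hMpsd.isUnit
  set u : Fin n → ℝ := M⁻¹.mulVec v with hudef
  have hMu : M.mulVec u = v := by
    rw [hudef, Matrix.mulVec_mulVec, Matrix.mul_nonsing_inv M hdet, Matrix.one_mulVec]
  set w : Fin n → ℝ := A₀.mulVec u with hwdef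
  have hvexp : v = (t * s) • w + γ • u := by
    rw [← hMu, hMdef, Matrix.add_mulVec, Matrix.smul_mulVec, Matrix.smul_mulVec,
      Matrix.one_mulVec, htdef, hwdef]
  set p : ℝ := u ⬝ᵥ u with hpdef
  set r : ℝ := u ⬝ᵥ A₀.mulVec u with hrdef
  set r2 : ℝ := w ⬝ᵥ w with hr2def
  set r3 : ℝ := w ⬝ᵥ A₀.mulVec w with hr3def
  have hwu : w ⬝ᵥ u = r := by rw [hwdef, ← sym_dot hA.1 u u]
  have huw : u ⬝ᵥ w = r := by rw [hwdef]
  have hwAu : w ⬝ᵥ A₀.mulVec u = r2 := by rw [hwdef]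
  have huAw : u ⬝ᵥ A₀.mulVec w = r2 := by rw [sym_dot hA.1 u w, ← hwdef, dotProduct_comm]
  have hvu : v ⬝ᵥ u = γ * p + t * s * r := by
    rw [hvexp]; simp [add_dotProduct, smul_dotProduct, smul_eq_mul, hwu]; ring
  have hNexp : v ⬝ᵥ v = γ ^ 2 * p + 2 * γ * (t * s) * r + (t * s) ^ 2 * r2 := by
    conv_lhs => rw [hvexp]
    simp [add_dotProduct, dotProduct_add, smul_dotProduct, dotProduct_smul, smul_eq_mul,
      hwu, huw]
    ring
  have hPexp : P = γ ^ 2 * r + 2 * γ * (t * s) * r2 + (t * s) ^ 2 * r3 := by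
    rw [hPdef]
    conv_lhs => rw [hvexp]
    rw [Matrix.mulVec_add, Matrix.mulVec_smul, Matrix.mulVec_smul]
    simp [add_dotProduct, dotProduct_add, smul_dotProduct, dotProduct_smul, smul_eq_mul,
      hwAu, huAw]
    ring
  have hr : 0 ≤ r := dot_nonneg hA u
  have hr2 : 0 ≤ r2 := dot_self_nonneg w
  have hp : 0 ≤ p := dot_self_nonneg u
  have h32 : r3 ≤ a * r2 := by
    have := quad_le_trace hA w; rw [← hadef] at this; exact this
  have h21 : r2 ≤ a * r := by
    have := sq_quad_le_trace hA u; rw [← hadef] at this; exact this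
  -- q and its bound
  set q : ℝ := γ * r + t * s * r2 with hqdef
  have hq : 0 ≤ q := by positivity
  have hqP : P ≤ q * (γ + t * s * a) := by
    have hdiff : q * (γ + t * s * a) - P
        = γ * (t * s) * (a * r - r2) + (t * s) ^ 2 * (a * r2 - r3) := by
      rw [hPexp, hqdef]; ring
    have h1 : 0 ≤ γ * (t * s) * (a * r - r2) :=
      mul_nonneg (mul_nonneg hγ.le (mul_nonneg ht hs.le)) (sub_nonneg.mpr h21)
    have h2 : 0 ≤ (t * s) ^ 2 * (a * r2 - r3) :=
      mul_nonneg (sq_nonneg _) (sub_nonneg.mpr h32)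
    linarith
  set e : ℝ := v ⬝ᵥ v - γ ^ 2 with hedef
  have hkey : -(e ^ 2 / (2 * s * P)) ≤ t * (t * s * q - e) / γ :=
    scalar_key hγ hs ha ht hq hvA hqP he
  -- relate to effLoss1
  have hgvu : γ * (γ - v ⬝ᵥ u) = t * s * q - e := by
    rw [hvu, hedef, hNexp, hqdef]; ring
  have hmain : -(e ^ 2 / (2 * s * P)) ≤ t * (γ - v ⬝ᵥ u) := by
    have h := hkey
    rw [← hgvu, mul_comm γ (γ - v ⬝ᵥ u), ← mul_assoc, mul_div_assoc,
      div_self hγ.ne', mul_one] at h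
    exact h
  have heff : effLoss1 A₀ v c d₁ σ b γ = c + (d₁ : ℝ) * (t * (γ - v ⬝ᵥ u)) := by
    simp only [effLoss1]
    rw [← hMdef, ← hudef, htdef]
    ring
  rw [heff]
  have hfin := mul_le_mul_of_nonneg_left hmain (by positivity : (0:ℝ) ≤ (d₁ : ℝ))
  linarith [hfin]

end helpers

set_option maxHeartbeats 1600000 in
/-- the optimal depth-1 loss L(γ) = inf_b ℓ̄(b, γ) is differentiable at the
critical point γ = ‖v‖ with L′(‖v‖) = 0: the transition is not first order. -/
theorem depth_one_first_derivative_continuous {n : ℕ} (hn : 1 ≤ n)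
    (A₀ : Matrix (Fin n) (Fin n) ℝ) (hA : A₀.PosSemidef)
    (v : Fin n → ℝ) (hv : v ≠ 0) (hvA : 0 < v ⬝ᵥ A₀.mulVec v)
    (c : ℝ) (d₁ : ℕ) (hd₁ : 0 < d₁) (σ : ℝ) (hσ : 0 ≤ σ) :
    HasDerivAt (fun γ : ℝ => ⨅ b : ℝ, effLoss1 A₀ v c d₁ σ b γ) 0
      (Real.sqrt (v ⬝ᵥ v)) := by
  classical
  have hN : 0 < v ⬝ᵥ v := dot_self_pos hv
  set γ₀ : ℝ := Real.sqrt (v ⬝ᵥ v) with hγ₀def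
  have hγ₀ : 0 < γ₀ := Real.sqrt_pos.mpr hN
  have hγ₀sq : γ₀ ^ 2 = v ⬝ᵥ v := Real.sq_sqrt hN.le
  set P : ℝ := v ⬝ᵥ A₀.mulVec v with hPdef
  set a : ℝ := A₀.trace with hadef
  have ha : 0 < a := by
    have := quad_le_trace hA v
    nlinarith
  have hs1 : (1 : ℝ) ≤ σ ^ 2 + (d₁ : ℝ) := by
    have : (1 : ℝ) ≤ (d₁ : ℝ) := by exact_mod_cast hd₁
    nlinarith [sq_nonneg σ]
  set K : ℝ := (d₁ : ℝ) * 9 * γ₀ ^ 2 / P with hKdef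
  have hK : 0 < K := by
    have : (0:ℝ) < (d₁ : ℝ) := by exact_mod_cast hd₁
    positivity
  set δ : ℝ := min (γ₀ / 2) (P / (4 * γ₀ * a)) with hδdef
  have hδ : 0 < δ := lt_min (by positivity) (by positivity)
  -- pointwise lower bound on the neighborhood
  have hbound : ∀ γ : ℝ, |γ - γ₀| < δ → ∀ b : ℝ,
      c - K * (γ - γ₀) ^ 2 ≤ effLoss1 A₀ v c d₁ σ b γ := by
    intro γ hγd b
    have habs := abs_sub_lt_iff.mp hγd
    have hδ1 : δ ≤ γ₀ / 2 := min_le_left _ _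
    have hδ2 : δ ≤ P / (4 * γ₀ * a) := min_le_right _ _
    have hγpos : 0 < γ := by linarith [habs.2]
    have hd2 : δ * (2 * γ₀) ≤ P / (2 * a) := by
      calc δ * (2 * γ₀) ≤ (P / (4 * γ₀ * a)) * (2 * γ₀) :=
            mul_le_mul_of_nonneg_right hδ2 (by positivity)
        _ = P / (2 * a) := by field_simp; ring
    have he : v ⬝ᵥ v - γ ^ 2 ≤ P / (2 * a) := by
      rw [← hγ₀sq]
      rcases le_or_gt γ₀ γ with h | h
      · have h0 : (0:ℝ) < P / (2 * a) := by positivity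
        nlinarith
      · nlinarith [habs.1, habs.2]
    have hlow := eff_lower A₀ hA v hvA c d₁ hd₁ σ hγpos he b
    rw [← hPdef] at hlow
    refine le_trans ?_ hlow
    have hesq : (v ⬝ᵥ v - γ ^ 2) ^ 2 ≤ 9 * γ₀ ^ 2 * (γ - γ₀) ^ 2 := by
      rw [← hγ₀sq]
      have hfac : (γ₀ ^ 2 - γ ^ 2) ^ 2 = (γ - γ₀) ^ 2 * (γ₀ + γ) ^ 2 := by ring
      have h5 : 0 ≤ 3 * γ₀ - (γ₀ + γ) := by linarith [habs.1, hδ1]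
      have h6 : 0 ≤ 3 * γ₀ + (γ₀ + γ) := by linarith
      rw [hfac]
      nlinarith [mul_nonneg (mul_nonneg h5 h6) (sq_nonneg (γ - γ₀))]
    have hPle : P ≤ 2 * (σ ^ 2 + (d₁ : ℝ)) * P := by
      have h7 : (0:ℝ) ≤ (2 * (σ ^ 2 + (d₁ : ℝ)) - 1) * P :=
        mul_nonneg (by linarith) hvA.le
      linarith
    have hstep : (d₁ : ℝ) * ((v ⬝ᵥ v - γ ^ 2) ^ 2 / (2 * (σ ^ 2 + (d₁ : ℝ)) * P))
        ≤ K * (γ - γ₀) ^ 2 := by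
      have hKeq : K * (γ - γ₀) ^ 2 = (d₁ : ℝ) * (9 * γ₀ ^ 2 * (γ - γ₀) ^ 2 / P) := by
        rw [hKdef]; field_simp
      rw [hKeq]
      have hd₁' : (0:ℝ) ≤ (d₁ : ℝ) := Nat.cast_nonneg _
      apply mul_le_mul_of_nonneg_left _ hd₁'
      calc (v ⬝ᵥ v - γ ^ 2) ^ 2 / (2 * (σ ^ 2 + (d₁ : ℝ)) * P)
          ≤ (v ⬝ᵥ v - γ ^ 2) ^ 2 / P :=
            div_le_div_of_nonneg_left (sq_nonneg _) hvA hPle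
        _ ≤ 9 * γ₀ ^ 2 * (γ - γ₀) ^ 2 / P := (div_le_div_iff_of_pos_right hvA).mpr hesq
    linarith
  -- Part 2: properties of L
  set L : ℝ → ℝ := fun γ => ⨅ b : ℝ, effLoss1 A₀ v c d₁ σ b γ with hLdef
  have hL0 : ∀ γ : ℝ, effLoss1 A₀ v c d₁ σ 0 γ = c := by
    intro γ; simp [effLoss1]
  have hLle : ∀ γ : ℝ, |γ - γ₀| < δ → L γ ≤ c := by
    intro γ hγd
    have hbb : BddBelow (Set.range fun b => effLoss1 A₀ v c d₁ σ b γ) := by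
      refine ⟨c - K * (γ - γ₀) ^ 2, ?_⟩
      rintro x ⟨b, rfl⟩
      exact hbound γ hγd b
    calc L γ ≤ effLoss1 A₀ v c d₁ σ 0 γ := ciInf_le hbb 0
      _ = c := hL0 γ
  have hLge : ∀ γ : ℝ, |γ - γ₀| < δ → c - K * (γ - γ₀) ^ 2 ≤ L γ := by
    intro γ hγd
    exact le_ciInf (hbound γ hγd)
  have hself : |γ₀ - γ₀| < δ := by simpa using hδ
  have hLγ₀ : L γ₀ = c := by
    have h1 := hLle γ₀ hself
    have h2 := hLge γ₀ hself
    simp at h2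
    linarith
  -- Part 3: the derivative
  rw [hasDerivAt_iff_isLittleO]
  simp only [smul_zero, sub_zero]
  rw [Asymptotics.isLittleO_iff]
  intro C hC
  have hmem : ∀ᶠ x in nhds γ₀, |x - γ₀| < min δ (C / K) := by
    have hpos : 0 < min δ (C / K) := lt_min hδ (div_pos hC hK)
    have := Metric.ball_mem_nhds γ₀ hpos
    filter_upwards [this] with x hx
    simpa [Real.dist_eq] using hx
  filter_upwards [hmem] with x hx
  have hx1 : |x - γ₀| < δ := lt_of_lt_of_le hx (min_le_left _ _)
  have hx2 : |x - γ₀| < C / K := lt_of_lt_of_le hx (min_le_right _ _)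
  have h1 := hLle x hx1
  have h2 := hLge x hx1
  rw [hLγ₀, Real.norm_eq_abs, Real.norm_eq_abs]
  have habs1 : |L x - c| ≤ K * (x - γ₀) ^ 2 := by
    rw [abs_le]
    constructor <;> nlinarith [sq_nonneg (x - γ₀)]
  have hsq : K * (x - γ₀) ^ 2 ≤ C * |x - γ₀| := by
    have h3 : (x - γ₀) ^ 2 = |x - γ₀| * |x - γ₀| := by
      rw [← sq_abs]; ring
    rw [h3, ← mul_assoc]
    apply mul_le_mul_of_nonneg_right _ (abs_nonneg _)
    calc K * |x - γ₀| ≤ K * (C / K) := mul_le_mul_of_nonneg_left hx2.le hK.le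
      _ = C := by field_simp
  linarith
end

section
/- Let D ≥ 2 and γ > 0. Then b = 0 is a strict local minimum of ℓ̄_D(·, γ): there exists δ > 0 such that ℓ̄_D(b, γ) > c for all b with 0 < |b| < δ. In particular, for networks with more than one hidden layer the trivial solution is always a local minimum of the effective landscape. -/
/-- for D ≥ 2 and γ > 0, b = 0 is a strict local minimum of the depth-D
effective loss: the trivial solution is always a local minimum for nets with more than
one hidden layer. -/
theorem deep_trivial_is_local_min {n : ℕ} (d₀ : ℕ) (hd₀ : 0 < d₀) (σ : ℝ) (hσ : 0 ≤ σ)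
    (v a : Fin n → ℝ) (ha : ∀ i, 0 ≤ a i) (c : ℝ)
    (D : ℕ) (hD : 2 ≤ D) (γ : ℝ) (hγ : 0 < γ) :
    ∃ δ > 0, ∀ b : ℝ, 0 < |b| → |b| < δ → c < effLoss d₀ σ v a c D b γ := by
  have hd0 : (0:ℝ) < d₀ := Nat.cast_pos.mpr hd₀
  set S := ∑ i, (d₀:ℝ)^(2*D) * v i ^2 / γ with hSdef
  have hS : 0 ≤ S := Finset.sum_nonneg (fun i _ => by positivity)
  have hM : 0 < γ * (D:ℝ) * (d₀:ℝ)^2 := by positivity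
  set M := γ * (D:ℝ) * (d₀:ℝ)^2 with hMdef
  have hfrac : 0 < M / (S+1) := by positivity
  refine ⟨min 1 (Real.sqrt (M/(S+1))), lt_min one_pos (Real.sqrt_pos.mpr hfrac), ?_⟩
  intro b hb hbδ
  have hbne : b ≠ 0 := abs_pos.mp hb
  have hbpos : 0 < b^2 := by positivity
  have hb1 : |b| < 1 := lt_of_lt_of_le hbδ (min_le_left _ _)
  have hb2 : |b| < Real.sqrt (M/(S+1)) := lt_of_lt_of_le hbδ (min_le_right _ _)
  have hbsq : b^2 < M/(S+1) := by
    calc b^2 = |b|^2 := (sq_abs b).symm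
    _ < Real.sqrt (M/(S+1))^2 := by
        exact pow_lt_pow_left₀ hb2 (abs_nonneg b) two_ne_zero
    _ = M/(S+1) := Real.sq_sqrt hfrac.le
  have hbsq1 : b^2 ≤ 1 := by nlinarith [sq_abs b, abs_nonneg b]
  have hpow : b^(2*D) ≤ b^4 := by
    calc b^(2*D) = (b^2)^D := by rw [pow_mul]
    _ ≤ (b^2)^2 := pow_le_pow_of_le_one (sq_nonneg b) hbsq1 hD
    _ = b^4 := by ring
  have hpownn : 0 ≤ b^(2*D) := by
    rw [pow_mul]; positivity
  have hsum : ∑ i, (d₀:ℝ)^(2*D) * b^(2*D) * (v i)^2 /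
      ((d₀:ℝ)^D * (σ^2 + (d₀:ℝ))^D * a i * b^(2*D) + γ) ≤ b^(2*D) * S := by
    rw [Finset.mul_sum]
    apply Finset.sum_le_sum
    intro i _
    have hden : γ ≤ (d₀:ℝ)^D * (σ^2 + (d₀:ℝ))^D * a i * b^(2*D) + γ := by
      have : 0 ≤ (d₀:ℝ)^D * (σ^2 + (d₀:ℝ))^D * a i * b^(2*D) := by
        have := ha i; positivity
      linarith
    calc (d₀:ℝ)^(2*D) * b^(2*D) * (v i)^2 /
        ((d₀:ℝ)^D * (σ^2 + (d₀:ℝ))^D * a i * b^(2*D) + γ)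
        ≤ (d₀:ℝ)^(2*D) * b^(2*D) * (v i)^2 / γ := by
          apply div_le_div_of_nonneg_left _ hγ hden
          positivity
    _ = b^(2*D) * ((d₀:ℝ)^(2*D) * (v i)^2 / γ) := by ring
  have hkey : b^(2*D) * S < M * b^2 := by
    have h1 : (S+1) * b^2 < M := by
      rw [lt_div_iff₀ (by positivity : (0:ℝ) < S+1)] at hbsq
      linarith [hbsq]
    nlinarith [mul_le_mul_of_nonneg_left hpow hS, sq_nonneg b]
  unfold effLoss
  have : ∑ i, (d₀:ℝ)^(2*D) * b^(2*D) * (v i)^2 /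
      ((d₀:ℝ)^D * (σ^2 + (d₀:ℝ))^D * a i * b^(2*D) + γ) < M * b^2 :=
    lt_of_le_of_lt hsum hkey
  rw [hMdef] at this
  linarith
end

section
/- Let D ≥ 2, v ≠ 0, and γ > 0. If b > 0 satisfies ℓ̄_D(b, γ) ≤ c = ℓ̄_D(0, γ), then b ≥ (1/d₀) (γ/‖v‖)^{1/(D−1)}. In particular, every nonzero global minimizer of ℓ̄_D(·, γ) is bounded away from 0 by (1/d₀)(γ/‖v‖)^{1/(D−1)}. -/
/-- for D ≥ 2, v ≠ 0 and γ > 0, any b > 0 with ℓ̄_D(b, γ) ≤ c satisfies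
b ≥ (1/d₀)(γ/‖v‖)^{1/(D−1)}: nonzero global minimizers are bounded away from zero. -/
theorem deep_minimizer_lower_bound {n : ℕ} (d₀ : ℕ) (hd₀ : 0 < d₀) (σ : ℝ) (hσ : 0 ≤ σ)
    (v a : Fin n → ℝ) (hv : v ≠ 0) (ha : ∀ i, 0 ≤ a i) (c : ℝ)
    (D : ℕ) (hD : 2 ≤ D) (γ : ℝ) (hγ : 0 < γ)
    (b : ℝ) (hb : 0 < b) (hle : effLoss d₀ σ v a c D b γ ≤ c) :
    (1 / (d₀ : ℝ)) * (γ / Real.sqrt (∑ i, (v i) ^ 2)) ^ ((1 : ℝ) / ((D : ℝ) - 1)) ≤ b := by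
  have hd₀R : (0:ℝ) < (d₀:ℝ) := by exact_mod_cast hd₀
  set S2 := ∑ i, (v i) ^ 2 with hS2def
  have hS2 : 0 < S2 := by
    obtain ⟨i, hi⟩ : ∃ i, v i ≠ 0 := by
      by_contra h
      push_neg at h
      exact hv (funext h)
    exact Finset.sum_pos' (fun j _ => sq_nonneg _)
      ⟨i, Finset.mem_univ i, by positivity⟩
  set S := Real.sqrt S2 with hSdef
  have hS : 0 < S := Real.sqrt_pos.mpr hS2
  have hSsq : S ^ 2 = S2 := Real.sq_sqrt hS2.le
  -- Step 1: γ D d₀² b² ≤ sum of terms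
  have h1 : γ * (D : ℝ) * (d₀ : ℝ) ^ 2 * b ^ 2 ≤
      ∑ i, (d₀ : ℝ) ^ (2 * D) * b ^ (2 * D) * (v i) ^ 2 /
        ((d₀ : ℝ) ^ D * (σ ^ 2 + (d₀ : ℝ)) ^ D * a i * b ^ (2 * D) + γ) := by
    unfold effLoss at hle; linarith
  -- Step 2: each term ≤ num/γ
  have h2 : (∑ i, (d₀ : ℝ) ^ (2 * D) * b ^ (2 * D) * (v i) ^ 2 /
        ((d₀ : ℝ) ^ D * (σ ^ 2 + (d₀ : ℝ)) ^ D * a i * b ^ (2 * D) + γ)) ≤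
      (d₀ : ℝ) ^ (2 * D) * b ^ (2 * D) * S2 / γ := by
    have : (∑ i, (d₀ : ℝ) ^ (2 * D) * b ^ (2 * D) * (v i) ^ 2 /
        ((d₀ : ℝ) ^ D * (σ ^ 2 + (d₀ : ℝ)) ^ D * a i * b ^ (2 * D) + γ)) ≤
        ∑ i, (d₀ : ℝ) ^ (2 * D) * b ^ (2 * D) * (v i) ^ 2 / γ := by
      apply Finset.sum_le_sum
      intro i _
      apply div_le_div_of_nonneg_left (by positivity) hγ
      have hai := ha i
      have : 0 ≤ (d₀ : ℝ) ^ D * (σ ^ 2 + (d₀ : ℝ)) ^ D * a i * b ^ (2 * D) := by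
        positivity
      linarith
    refine this.trans_eq ?_
    rw [← Finset.sum_div, ← Finset.mul_sum]
  have h3 : γ * (D : ℝ) * (d₀ : ℝ) ^ 2 * b ^ 2 ≤
      (d₀ : ℝ) ^ (2 * D) * b ^ (2 * D) * S2 / γ := h1.trans h2
  -- Step 3: γ² ≤ ((d₀ b)^(D-1) S)²
  have h4 : γ * (D : ℝ) * (d₀ : ℝ) ^ 2 * b ^ 2 * γ ≤
      (d₀ : ℝ) ^ (2 * D) * b ^ (2 * D) * S2 := by
    rw [← le_div_iff₀ hγ]; exact h3
  have hDR : (2:ℝ) ≤ (D:ℝ) := by exact_mod_cast hD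
  have hpow : ((d₀:ℝ) * b) ^ (2 * D) = (((d₀:ℝ) * b) ^ (D - 1)) ^ 2 * ((d₀:ℝ)*b) ^ 2 := by
    rw [← pow_mul, ← pow_add]
    congr 1
    omega
  have hsplit : (d₀ : ℝ) ^ (2 * D) * b ^ (2 * D) = ((d₀:ℝ) * b) ^ (2 * D) := by
    rw [mul_pow]
  have hfact : ((((d₀:ℝ) * b) ^ (D - 1)) * S) ^ 2 = (((d₀:ℝ) * b) ^ (D - 1)) ^ 2 * S2 := by
    rw [mul_pow, hSsq]
  have hD1 : (1:ℝ) ≤ (D:ℝ) := by linarith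
  have h4' := h4
  rw [hsplit, hpow] at h4'
  have hγ2 : (0:ℝ) ≤ γ ^ 2 * ((d₀:ℝ)*b) ^ 2 := by positivity
  have hDmul : γ ^ 2 * ((d₀:ℝ)*b) ^ 2 * 1 ≤ γ ^ 2 * ((d₀:ℝ)*b) ^ 2 * (D:ℝ) :=
    mul_le_mul_of_nonneg_left hD1 hγ2
  have h5 : γ ^ 2 * ((d₀:ℝ)*b) ^ 2 ≤ ((((d₀:ℝ) * b) ^ (D - 1)) * S) ^ 2 * ((d₀:ℝ)*b) ^ 2 := by
    rw [hfact]
    nlinarith [h4', hDmul]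
  have hb2 : (0:ℝ) < ((d₀:ℝ)*b)^2 := by positivity
  have h6 : γ ^ 2 ≤ ((((d₀:ℝ) * b) ^ (D - 1)) * S) ^ 2 :=
    le_of_mul_le_mul_right h5 hb2
  have hX : (0:ℝ) < (((d₀:ℝ) * b) ^ (D - 1)) * S := by positivity
  have h7 : γ ≤ (((d₀:ℝ) * b) ^ (D - 1)) * S := by
    nlinarith [mul_pos hγ hX]
  have h8 : γ / S ≤ ((d₀:ℝ) * b) ^ (D - 1) := by
    rw [div_le_iff₀ hS]; exact h7
  -- Step 4: take rpow with exponent 1/(D-1)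
  have hxpos : 0 < γ / S := by positivity
  have hepos : (0:ℝ) < 1 / ((D:ℝ) - 1) := by
    apply div_pos one_pos; linarith
  have h9 := Real.rpow_le_rpow hxpos.le h8 hepos.le
  have hybpos : (0:ℝ) < (d₀:ℝ) * b := by positivity
  have hcast : ((D - 1 : ℕ) : ℝ) = (D:ℝ) - 1 := by
    have : 1 ≤ D := by omega
    push_cast [this]; ring
  have h10 : (((d₀:ℝ) * b) ^ (D - 1) : ℝ) ^ ((1:ℝ) / ((D:ℝ) - 1)) = (d₀:ℝ) * b := by
    rw [← Real.rpow_natCast ((d₀:ℝ)*b) (D-1), hcast,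
      ← Real.rpow_mul hybpos.le]
    have hne : (D:ℝ) - 1 ≠ 0 := by intro h; linarith
    rw [mul_one_div, div_self hne, Real.rpow_one]
  rw [h10] at h9
  rw [div_mul_eq_mul_div, one_mul, div_le_iff₀ hd₀R]
  linarith [h9]
end

section
/- Let D ≥ 1, γ > 0, and suppose a_min := min_i a_i > 0. If b > 0 is a critical point of ℓ̄_D(·, γ) (i.e., ∂ℓ̄_D/∂b (b, γ) = 0), then b ≤ (‖v‖ / (d₀ (σ²+d₀)^D a_min))^{1/(D+1)}. In particular, every nonzero global minimizer of ℓ̄_D(·, γ) obeys this upper bound, uniformly in γ. -/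
/-- for D ≥ 1, γ > 0 and a_min = minᵢ aᵢ > 0, any positive critical point b
of ℓ̄_D(·, γ) satisfies b ≤ (‖v‖/(d₀ (σ²+d₀)^D a_min))^{1/(D+1)}, uniformly in γ. -/
theorem deep_critical_point_upper_bound {n : ℕ} (hn : 0 < n)
    (d₀ : ℕ) (hd₀ : 0 < d₀) (σ : ℝ) (hσ : 0 ≤ σ)
    (v a : Fin n → ℝ) (ha : ∀ i, 0 < a i) (c : ℝ)
    (D : ℕ) (hD : 1 ≤ D) (γ : ℝ) (hγ : 0 < γ)
    (b : ℝ) (hb : 0 < b)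
    (hcrit : HasDerivAt (fun b' => effLoss d₀ σ v a c D b' γ) 0 b) :
    b ≤ (Real.sqrt (∑ i, (v i) ^ 2) /
        ((d₀ : ℝ) * (σ ^ 2 + (d₀ : ℝ)) ^ D * ⨅ i, a i)) ^ ((1 : ℝ) / ((D : ℝ) + 1)) := by
  haveI : Nonempty (Fin n) := ⟨⟨0, hn⟩⟩
  set B : Fin n → ℝ := fun i => (d₀ : ℝ) ^ D * (σ ^ 2 + (d₀ : ℝ)) ^ D * a i with hB
  have hd₀R : (0:ℝ) < d₀ := by exact_mod_cast hd₀
  have hs : (0:ℝ) < σ ^ 2 + d₀ := by positivity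
  have hDR : (0:ℝ) < D := by exact_mod_cast hD
  -- infimum facts
  obtain ⟨j, hj⟩ := exists_eq_ciInf_of_finite (f := a)
  set am : ℝ := ⨅ i, a i with ham
  have ham_pos : 0 < am := hj ▸ ha j
  have ham_le : ∀ i, am ≤ a i := fun i => ciInf_le (Set.Finite.bddBelow (Set.finite_range a)) i
  have hBpos : ∀ i, 0 < B i := fun i => by have := ha i; positivity
  have hE : ∀ i, 0 < B i * b ^ (2*D) + γ := fun i => by have := hBpos i; positivity
  have hne : ∀ i, B i * b ^ (2*D) + γ ≠ 0 := fun i => (hE i).ne'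
  -- derivative computation
  have key : HasDerivAt (fun b' => effLoss d₀ σ v a c D b' γ)
      (-∑ i, ((d₀:ℝ)^(2*D) * (((2*D : ℕ) : ℝ) * b^(2*D-1)) * (v i)^2 * (B i * b^(2*D) + γ)
          - (d₀:ℝ)^(2*D) * b^(2*D) * (v i)^2 * (B i * (((2*D : ℕ) : ℝ) * b^(2*D-1))))
          / (B i * b^(2*D) + γ)^2
        + γ * (D:ℝ) * (d₀:ℝ)^2 * ((2:ℕ) * b^(2-1))) b := by
    have hsum : ∀ i ∈ Finset.univ, HasDerivAt
        (fun x : ℝ => (d₀ : ℝ) ^ (2 * D) * x ^ (2 * D) * (v i) ^ 2 /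
          (B i * x ^ (2 * D) + γ))
        (((d₀:ℝ)^(2*D) * (((2*D : ℕ) : ℝ) * b^(2*D-1)) * (v i)^2 * (B i * b^(2*D) + γ)
          - (d₀:ℝ)^(2*D) * b^(2*D) * (v i)^2 * (B i * (((2*D : ℕ) : ℝ) * b^(2*D-1))))
          / (B i * b^(2*D) + γ)^2) b := by
      intro i _
      have hu : HasDerivAt (fun x : ℝ => (d₀ : ℝ) ^ (2 * D) * x ^ (2 * D) * (v i) ^ 2)
          ((d₀:ℝ)^(2*D) * (((2*D : ℕ) : ℝ) * b^(2*D-1)) * (v i)^2) b :=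
        ((hasDerivAt_pow (2*D) b).const_mul _).mul_const _
      have hw : HasDerivAt (fun x : ℝ => B i * x ^ (2 * D) + γ)
          (B i * (((2*D : ℕ) : ℝ) * b^(2*D-1))) b :=
        (((hasDerivAt_pow (2*D) b).const_mul _).add_const _)
      exact hu.div hw (hne i)
    have hq : HasDerivAt (fun x : ℝ => γ * (D:ℝ) * (d₀:ℝ)^2 * x^2)
        (γ * (D:ℝ) * (d₀:ℝ)^2 * ((2:ℕ) * b^(2-1))) b :=
      (hasDerivAt_pow 2 b).const_mul _
    simpa [effLoss] using (((HasDerivAt.fun_sum hsum).fun_neg.add_const c).fun_add hq)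
  have h0 := key.unique hcrit
  -- simplify the critical point equation
  set p : ℝ := b ^ (2*D-1) with hp
  have hppos : 0 < p := by positivity
  have hqp : b ^ (2*D) = p * b := by
    rw [hp, ← pow_succ]; congr 1; omega
  set C1 : ℝ := 2 * (D:ℝ) * γ * (d₀:ℝ)^(2*D) with hC1
  have hC1pos : 0 < C1 := by positivity
  have hterm : ∀ i, ((d₀:ℝ)^(2*D) * (((2*D : ℕ) : ℝ) * b^(2*D-1)) * (v i)^2 * (B i * b^(2*D) + γ)
          - (d₀:ℝ)^(2*D) * b^(2*D) * (v i)^2 * (B i * (((2*D : ℕ) : ℝ) * b^(2*D-1))))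
          / (B i * b^(2*D) + γ)^2
        = C1 * (v i)^2 * p / (B i * b^(2*D) + γ)^2 := by
    intro i
    congr 1
    push_cast
    ring
  have heq : ∑ i, C1 * (v i)^2 * p / (B i * b^(2*D) + γ)^2 = 2 * γ * (D:ℝ) * (d₀:ℝ)^2 * b := by
    have h1 : ∑ i, ((d₀:ℝ)^(2*D) * (((2*D : ℕ) : ℝ) * b^(2*D-1)) * (v i)^2 * (B i * b^(2*D) + γ)
          - (d₀:ℝ)^(2*D) * b^(2*D) * (v i)^2 * (B i * (((2*D : ℕ) : ℝ) * b^(2*D-1))))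
          / (B i * b^(2*D) + γ)^2
        = ∑ i, C1 * (v i)^2 * p / (B i * b^(2*D) + γ)^2 :=
      Finset.sum_congr rfl fun i _ => hterm i
    rw [h1] at h0
    norm_num at h0
    linarith
  -- bound each summand
  set Bm : ℝ := (d₀:ℝ)^D * (σ^2 + (d₀:ℝ))^D * am with hBm
  have hBm_pos : 0 < Bm := by positivity
  have hbound : ∀ i, C1 * (v i)^2 * p / (B i * b^(2*D) + γ)^2
      ≤ C1 * p / (Bm * b^(2*D))^2 * (v i)^2 := by
    intro i
    rw [div_mul_eq_mul_div, show C1 * p * (v i)^2 = C1 * (v i)^2 * p by ring]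
    apply div_le_div_of_nonneg_left (by positivity) (by positivity)
    calc (Bm * b^(2*D))^2 ≤ (B i * b^(2*D))^2 := by
          apply pow_le_pow_left₀ (by positivity)
          apply mul_le_mul_of_nonneg_right _ (by positivity)
          exact mul_le_mul_of_nonneg_left (ham_le i) (by positivity)
      _ ≤ (B i * b^(2*D) + γ)^2 := by
          apply pow_le_pow_left₀ (mul_nonneg (hBpos i).le (by positivity))
          linarith
  have hmain : 2 * γ * (D:ℝ) * (d₀:ℝ)^2 * b ≤ C1 * p / (Bm * b^(2*D))^2 * ∑ i, (v i)^2 := by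
    rw [← heq, Finset.mul_sum]
    exact Finset.sum_le_sum fun i _ => hbound i
  set S : ℝ := ∑ i, (v i)^2 with hS
  set K : ℝ := (d₀:ℝ) * (σ^2 + (d₀:ℝ))^D * am with hK
  have hKpos : 0 < K := by positivity
  -- derive K^2 * (b^(D+1))^2 ≤ S
  have hd2 : (d₀:ℝ)^(2*D) = ((d₀:ℝ)^D)^2 := by rw [show 2*D = D*2 by ring, pow_mul]
  have hb2 : (b^(D+1))^2 = p * b^3 := by
    rw [← pow_mul, hp, ← pow_add]; congr 1; omega
  have hfinal : K^2 * (b^(D+1))^2 ≤ S := by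
    have h2 : 2 * γ * (D:ℝ) * (d₀:ℝ)^2 * b * (Bm * b^(2*D))^2 ≤ C1 * p * S := by
      rw [div_mul_eq_mul_div, le_div_iff₀ (by positivity)] at hmain
      linarith [hmain]
    apply le_of_mul_le_mul_left _ (show (0:ℝ) < C1 * p by positivity)
    calc C1 * p * (K^2 * (b^(D+1))^2)
        = 2 * γ * (D:ℝ) * (d₀:ℝ)^2 * b * (Bm * b^(2*D))^2 := by
          rw [hb2, hqp, hC1, hd2, hBm, hK]; ring
      _ ≤ C1 * p * S := h2
  have hSnn : 0 ≤ S := Finset.sum_nonneg fun i _ => sq_nonneg _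
  have hstep : K * b^(D+1) ≤ Real.sqrt S := by
    have h3 : (K * b^(D+1))^2 ≤ (Real.sqrt S)^2 := by
      rw [Real.sq_sqrt hSnn]; calc (K * b^(D+1))^2 = K^2 * (b^(D+1))^2 := by ring
        _ ≤ S := hfinal
    have := Real.sqrt_le_sqrt h3
    rwa [Real.sqrt_sq (by positivity), Real.sqrt_sq (Real.sqrt_nonneg _)] at this
  have hpow : b^(D+1) ≤ Real.sqrt S / K := (le_div_iff₀ hKpos).mpr (by linarith [hstep])
  have hbrw : b = (b ^ (D+1 : ℕ)) ^ ((1:ℝ) / ((D:ℝ) + 1)) := by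
    rw [← Real.rpow_natCast b (D+1), ← Real.rpow_mul hb.le]
    push_cast
    rw [mul_one_div, div_self (by positivity), Real.rpow_one]
  calc b = (b ^ (D+1 : ℕ)) ^ ((1:ℝ) / ((D:ℝ) + 1)) := hbrw
    _ ≤ (Real.sqrt S / K) ^ ((1:ℝ) / ((D:ℝ) + 1)) :=
        Real.rpow_le_rpow (by positivity) hpow (by positivity)
end

section
/- Let D ≥ 2, suppose v ≠ 0 and a_i > 0 for every i. Then there exists γ* ∈ (0, ∞) such that L_D(γ) < c for all 0 < γ < γ* (feature learning phase) and L_D(γ) = c for all γ ≥ γ* (trivial phase). -/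
/-- Generic form of the effective loss. -/
noncomputable def gLoss {n : ℕ} (K A E : ℝ) (v a : Fin n → ℝ) (c : ℝ)
    (D : ℕ) (b γ : ℝ) : ℝ :=
  -∑ i, A * b ^ (2 * D) * (v i) ^ 2 / (K * a i * b ^ (2 * D) + γ) + c + γ * E * b ^ 2

lemma effLoss_eq_gLoss {n : ℕ} (d₀ : ℕ) (σ : ℝ) (v a : Fin n → ℝ) (c : ℝ)
    (D : ℕ) (b γ : ℝ) :
    effLoss d₀ σ v a c D b γ =
      gLoss ((d₀ : ℝ) ^ D * (σ ^ 2 + (d₀ : ℝ)) ^ D) ((d₀ : ℝ) ^ (2 * D))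
        ((D : ℝ) * (d₀ : ℝ) ^ 2) v a c D b γ := by
  simp only [effLoss, gLoss]; ring

lemma gLoss_two_phases {n : ℕ} {K A E : ℝ} (hK : 0 < K) (hA : 0 < A) (hE : 0 < E)
    {v a : Fin n → ℝ} (hv : v ≠ 0) (ha : ∀ i, 0 < a i) (c : ℝ) {D : ℕ} (hD : 1 ≤ D) :
    ∃ γstar : ℝ, 0 < γstar ∧
      (∀ γ : ℝ, 0 < γ → γ < γstar → (⨅ b : ℝ, gLoss K A E v a c D b γ) < c) ∧
      (∀ γ : ℝ, γstar ≤ γ → (⨅ b : ℝ, gLoss K A E v a c D b γ) = c) := by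
  classical
  have hbpow : ∀ b : ℝ, 0 ≤ b ^ (2 * D) := fun b => by
    rw [pow_mul]; exact pow_nonneg (sq_nonneg b) D
  have hden : ∀ (i : Fin n) (b γ : ℝ), 0 < γ → 0 < K * a i * b ^ (2 * D) + γ :=
    fun i b γ hγ => add_pos_of_nonneg_of_pos
      (mul_nonneg (mul_nonneg hK.le (ha i).le) (hbpow b)) hγ
  have hnum : ∀ (i : Fin n) (b : ℝ), 0 ≤ A * b ^ (2 * D) * (v i) ^ 2 :=
    fun i b => mul_nonneg (mul_nonneg hA.le (hbpow b)) (sq_nonneg _)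
  -- value at b = 0
  have hzero : ∀ γ : ℝ, gLoss K A E v a c D 0 γ = c := by
    intro γ
    simp [gLoss, zero_pow (by omega : 2 * D ≠ 0)]
  -- monotonicity in γ
  have hmono : ∀ (b γ₁ γ₂ : ℝ), 0 < γ₁ → γ₁ ≤ γ₂ →
      gLoss K A E v a c D b γ₁ ≤ gLoss K A E v a c D b γ₂ := by
    intro b γ₁ γ₂ h1 h12
    simp only [gLoss]
    have hsum : ∑ i, A * b ^ (2 * D) * (v i) ^ 2 / (K * a i * b ^ (2 * D) + γ₂)
        ≤ ∑ i, A * b ^ (2 * D) * (v i) ^ 2 / (K * a i * b ^ (2 * D) + γ₁) :=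
      Finset.sum_le_sum fun i _ =>
        div_le_div_of_nonneg_left (hnum i b) (hden i b γ₁ h1) (by linarith)
    have hlast : γ₁ * E * b ^ 2 ≤ γ₂ * E * b ^ 2 :=
      mul_le_mul_of_nonneg_right (mul_le_mul_of_nonneg_right h12 hE.le) (sq_nonneg b)
    linarith
  -- each fraction is at most A v i ^2 / (K a i)
  have hfrac_le_M : ∀ (i : Fin n) (b γ : ℝ), 0 < γ →
      A * b ^ (2 * D) * (v i) ^ 2 / (K * a i * b ^ (2 * D) + γ)
        ≤ A * (v i) ^ 2 / (K * a i) := by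
    intro i b γ hγ
    rw [div_le_div_iff₀ (hden i b γ hγ) (mul_pos hK (ha i))]
    nlinarith [mul_nonneg (mul_nonneg hA.le (sq_nonneg (v i))) hγ.le]
  set M : ℝ := ∑ i, A * (v i) ^ 2 / (K * a i) with hMdef
  have hM0 : 0 ≤ M := Finset.sum_nonneg fun i _ =>
    div_nonneg (mul_nonneg hA.le (sq_nonneg _)) (mul_pos hK (ha i)).le
  -- lower bound on the loss, uniform in b
  have hlb : ∀ γ : ℝ, 0 < γ → ∀ b : ℝ, c - M ≤ gLoss K A E v a c D b γ := by
    intro γ hγ b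
    simp only [gLoss]
    have h1 : ∑ i, A * b ^ (2 * D) * (v i) ^ 2 / (K * a i * b ^ (2 * D) + γ) ≤ M :=
      Finset.sum_le_sum fun i _ => hfrac_le_M i b γ hγ
    have h2 : 0 ≤ γ * E * b ^ 2 := mul_nonneg (mul_nonneg hγ.le hE.le) (sq_nonneg b)
    linarith
  have hbdd : ∀ γ : ℝ, 0 < γ →
      BddBelow (Set.range fun b => gLoss K A E v a c D b γ) := by
    intro γ hγ
    exact ⟨c - M, by rintro x ⟨b, rfl⟩; exact hlb γ hγ b⟩
  -- big γ : trivial phase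
  set W : ℝ := A * ∑ i, (v i) ^ 2 with hWdef
  have hW0 : 0 ≤ W := mul_nonneg hA.le (Finset.sum_nonneg fun i _ => sq_nonneg _)
  set Γ : ℝ := max 1 (max (M / E) (W / E)) with hΓdef
  have hbig : ∀ γ : ℝ, Γ ≤ γ → ∀ b : ℝ, c ≤ gLoss K A E v a c D b γ := by
    intro γ hγ b
    have hγ1 : (1 : ℝ) ≤ γ := le_trans (le_max_left _ _) hγ
    have hγpos : (0 : ℝ) < γ := lt_of_lt_of_le one_pos hγ1
    have hγM : M / E ≤ γ := le_trans (le_trans (le_max_left _ _) (le_max_right _ _)) hγ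
    have hγW : W / E ≤ γ := le_trans (le_trans (le_max_right _ _) (le_max_right _ _)) hγ
    have hME : M ≤ γ * E := by
      have := mul_le_mul_of_nonneg_right hγM hE.le
      rwa [div_mul_cancel₀ _ hE.ne'] at this
    have hWE : W ≤ γ * E := by
      have := mul_le_mul_of_nonneg_right hγW hE.le
      rwa [div_mul_cancel₀ _ hE.ne'] at this
    suffices h : ∑ i, A * b ^ (2 * D) * (v i) ^ 2 / (K * a i * b ^ (2 * D) + γ)
        ≤ γ * E * b ^ 2 by
      simp only [gLoss]; linarith
    rcases le_or_gt 1 (b ^ 2) with hb | hb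
    · have h1 : ∑ i, A * b ^ (2 * D) * (v i) ^ 2 / (K * a i * b ^ (2 * D) + γ) ≤ M :=
        Finset.sum_le_sum fun i _ => hfrac_le_M i b γ hγpos
      have h2 : γ * E ≤ γ * E * b ^ 2 :=
        le_mul_of_one_le_right (mul_nonneg hγpos.le hE.le) hb
      linarith
    · have hbD : b ^ (2 * D) ≤ b ^ 2 := by
        rw [pow_mul]
        calc (b ^ 2) ^ D ≤ (b ^ 2) ^ 1 :=
              pow_le_pow_of_le_one (sq_nonneg b) hb.le hD
          _ = b ^ 2 := pow_one _
      have h1 : ∀ i : Fin n, A * b ^ (2 * D) * (v i) ^ 2 / (K * a i * b ^ (2 * D) + γ)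
          ≤ A * b ^ 2 * (v i) ^ 2 / γ := by
        intro i
        calc A * b ^ (2 * D) * (v i) ^ 2 / (K * a i * b ^ (2 * D) + γ)
            ≤ A * b ^ (2 * D) * (v i) ^ 2 / γ :=
              div_le_div_of_nonneg_left (hnum i b) hγpos
                (le_add_of_nonneg_left
                  (mul_nonneg (mul_nonneg hK.le (ha i).le) (hbpow b)))
          _ ≤ A * b ^ 2 * (v i) ^ 2 / γ := by
              exact div_le_div_of_nonneg_right
                (mul_le_mul_of_nonneg_right
                  (mul_le_mul_of_nonneg_left hbD hA.le) (sq_nonneg _)) hγpos.le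
      calc ∑ i, A * b ^ (2 * D) * (v i) ^ 2 / (K * a i * b ^ (2 * D) + γ)
          ≤ ∑ i, A * b ^ 2 * (v i) ^ 2 / γ := Finset.sum_le_sum fun i _ => h1 i
        _ = W * b ^ 2 / γ := by
            rw [← Finset.sum_div, hWdef, Finset.mul_sum, Finset.sum_mul]
            congr 1
            exact Finset.sum_congr rfl fun i _ => by ring
        _ ≤ γ * E * b ^ 2 := by
            rw [div_le_iff₀ hγpos]
            nlinarith [mul_le_mul_of_nonneg_right hWE (sq_nonneg b),
              mul_nonneg (mul_nonneg hγpos.le hE.le) (sq_nonneg b)]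
  -- small γ : feature learning
  obtain ⟨j, hj⟩ : ∃ j, v j ≠ 0 := Function.ne_iff.mp hv
  set S0 : ℝ := ∑ i, A * (v i) ^ 2 / (K * a i + 1) with hS0def
  have hS0 : 0 < S0 :=
    Finset.sum_pos'
      (fun i _ => div_nonneg (mul_nonneg hA.le (sq_nonneg _))
        (add_pos (mul_pos hK (ha i)) one_pos).le)
      ⟨j, Finset.mem_univ j,
        div_pos (mul_pos hA (sq_pos_of_ne_zero hj))
          (add_pos (mul_pos hK (ha j)) one_pos)⟩
  set γ₀ : ℝ := min 1 (S0 / (E + 1)) with hγ₀def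
  have hγ₀pos : 0 < γ₀ := lt_min one_pos (div_pos hS0 (by linarith))
  have hsmall : ∀ γ : ℝ, 0 < γ → γ < γ₀ → gLoss K A E v a c D 1 γ < c := by
    intro γ hγ hγlt
    have hγ1 : γ ≤ 1 := le_of_lt (lt_of_lt_of_le hγlt (min_le_left _ _))
    have hγ2 : γ < S0 / (E + 1) := lt_of_lt_of_le hγlt (min_le_right _ _)
    have hγ2' : γ * (E + 1) < S0 := (lt_div_iff₀ (by linarith)).mp hγ2
    have hγE : γ * E < γ * (E + 1) := mul_lt_mul_of_pos_left (lt_add_one E) hγ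
    have hsum : S0 ≤ ∑ i, A * (v i) ^ 2 / (K * a i + γ) := by
      apply Finset.sum_le_sum
      intro i _
      exact div_le_div_of_nonneg_left (mul_nonneg hA.le (sq_nonneg _))
        (add_pos (mul_pos hK (ha i)) hγ) (by linarith)
    have hval : gLoss K A E v a c D 1 γ
        = -∑ i, A * (v i) ^ 2 / (K * a i + γ) + c + γ * E := by
      simp [gLoss]
    rw [hval]; linarith
  -- the feature-learning set and its supremum
  set S : Set ℝ := {γ : ℝ | 0 < γ ∧ ∃ b : ℝ, gLoss K A E v a c D b γ < c} with hSdef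
  have hmem : γ₀ / 2 ∈ S :=
    ⟨half_pos hγ₀pos, 1, hsmall (γ₀ / 2) (half_pos hγ₀pos) (half_lt_self hγ₀pos)⟩
  have hSne : S.Nonempty := ⟨γ₀ / 2, hmem⟩
  have hSbdd : BddAbove S := by
    refine ⟨Γ, fun γ hγ => ?_⟩
    by_contra h
    push_neg at h
    obtain ⟨b, hb⟩ := hγ.2
    exact absurd (hbig γ h.le b) (not_le.mpr hb)
  set γs : ℝ := sSup S with hγsdef
  have hγs_pos : 0 < γs := lt_of_lt_of_le (half_pos hγ₀pos) (le_csSup hSbdd hmem)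
  refine ⟨γs, hγs_pos, ?_, ?_⟩
  · -- feature learning phase
    intro γ hγ hγlt
    obtain ⟨γ', hγ'S, hγγ'⟩ := exists_lt_of_lt_csSup hSne hγlt
    obtain ⟨b, hb⟩ := hγ'S.2
    have hle : gLoss K A E v a c D b γ ≤ gLoss K A E v a c D b γ' :=
      hmono b γ γ' hγ hγγ'.le
    calc (⨅ b : ℝ, gLoss K A E v a c D b γ) ≤ gLoss K A E v a c D b γ :=
          ciInf_le (hbdd γ hγ) b
      _ < c := lt_of_le_of_lt hle hb
  · -- trivial phase
    intro γ hγsγ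
    have hγpos : 0 < γ := lt_of_lt_of_le hγs_pos hγsγ
    have hge : ∀ b : ℝ, c ≤ gLoss K A E v a c D b γ := by
      intro b
      by_contra h
      push_neg at h
      have hcont : ContinuousAt (fun t => gLoss K A E v a c D b t) γ := by
        simp only [gLoss]
        apply ContinuousAt.add (ContinuousAt.add ?_ continuousAt_const) ?_
        · apply ContinuousAt.neg
          exact tendsto_finset_sum _ fun i _ =>
            ContinuousAt.div continuousAt_const
              (continuousAt_const.add continuousAt_id)
              (ne_of_gt (hden i b γ hγpos))
        · exact (continuousAt_id.mul continuousAt_const).mul continuousAt_const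
      have hev : ∀ᶠ t in nhds γ, gLoss K A E v a c D b t < c :=
        hcont.eventually_lt continuousAt_const h
      obtain ⟨t, hgt, ht⟩ :=
        ((hev.filter_mono nhdsWithin_le_nhds).and
          (eventually_mem_nhdsWithin (s := Set.Ioi γ))).exists
      have htS : t ∈ S := ⟨lt_trans hγpos ht, b, hgt⟩
      have : t ≤ γs := le_csSup hSbdd htS
      have : γ < γs := lt_of_lt_of_le ht this
      linarith
    refine le_antisymm ?_ (le_ciInf hge)
    calc (⨅ b : ℝ, gLoss K A E v a c D b γ) ≤ gLoss K A E v a c D 0 γ :=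
          ciInf_le (hbdd γ hγpos) 0
      _ = c := hzero γ

/-- for D ≥ 2, v ≠ 0 and positive covariance eigenvalues, there is a
critical γ* ∈ (0, ∞) with L_D(γ) < c for 0 < γ < γ* (feature learning phase) and
L_D(γ) = c for γ ≥ γ* (trivial phase). -/
theorem deep_two_phases {n : ℕ} (d₀ : ℕ) (hd₀ : 0 < d₀) (σ : ℝ) (hσ : 0 ≤ σ)
    (v a : Fin n → ℝ) (hv : v ≠ 0) (ha : ∀ i, 0 < a i) (c : ℝ)
    (D : ℕ) (hD : 2 ≤ D) :
    ∃ γstar : ℝ, 0 < γstar ∧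
      (∀ γ : ℝ, 0 < γ → γ < γstar → (⨅ b : ℝ, effLoss d₀ σ v a c D b γ) < c) ∧
      (∀ γ : ℝ, γstar ≤ γ → (⨅ b : ℝ, effLoss d₀ σ v a c D b γ) = c) := by
  have hd0R : (0 : ℝ) < (d₀ : ℝ) := by exact_mod_cast hd₀
  have hK : (0 : ℝ) < (d₀ : ℝ) ^ D * (σ ^ 2 + (d₀ : ℝ)) ^ D :=
    mul_pos (pow_pos hd0R D) (pow_pos (by positivity) D)
  have hA : (0 : ℝ) < (d₀ : ℝ) ^ (2 * D) := pow_pos hd0R _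
  have hDpos : (0 : ℝ) < (D : ℝ) := by
    have : (0 : ℕ) < D := by omega
    exact_mod_cast this
  have hE : (0 : ℝ) < (D : ℝ) * (d₀ : ℝ) ^ 2 := mul_pos hDpos (pow_pos hd0R 2)
  simp only [effLoss_eq_gLoss]
  exact gLoss_two_phases hK hA hE hv ha c (by omega)
end

section
/- Let D ≥ 2, suppose v ≠ 0 and a_i > 0 for every i, and let γ* ∈ (0, ∞) be the critical value such that L_D(γ) < c for 0 < γ < γ* and L_D(γ) = c for γ ≥ γ*. Then L_D is concave on (0, ∞), its one-sided derivatives at γ* exist, the right derivative at γ* equals 0, and the left derivative at γ* is at least D (γ*/‖v‖)^{2/(D−1)} > 0. Hence L_D is not differentiable at γ*: a network with D ≥ 2 hidden layers has a first-order phase transition at γ = γ*. -/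
lemma harm_ineq (A u w s t : ℝ) (hA : 0 ≤ A) (hu : 0 < u) (hw : 0 < w)
    (hs : 0 ≤ s) (ht : 0 ≤ t) (hst : s + t = 1) :
    A / (s*u + t*w) ≤ s * (A/u) + t * (A/w) := by
  have ht' : t = 1 - s := by linarith
  subst ht'
  have hd : 0 < s*u + (1-s)*w := by
    rcases eq_or_lt_of_le hs with h | h
    · rw [← h]; simpa using hw
    · exact add_pos_of_pos_of_nonneg (mul_pos h hu) (mul_nonneg ht hw.le)
  have h1 : s*(A/u) + (1-s)*(A/w) = (s*A*w + (1-s)*A*u) / (u*w) := by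
    field_simp
  rw [h1, div_le_div_iff₀ hd (mul_pos hu hw)]
  nlinarith [mul_nonneg (mul_nonneg hA (mul_nonneg hs ht)) (sq_nonneg (u - w))]

section
variable {n : ℕ} (d₀ : ℕ) (σ : ℝ) (v a : Fin n → ℝ) (c : ℝ) (D : ℕ)

lemma effLoss_lower (hd₀ : 0 < d₀) (ha : ∀ i, 0 < a i) (b γ : ℝ) (hγ : 0 < γ) :
    c - ∑ i, (d₀ : ℝ) ^ (2 * D) * (v i) ^ 2 /
        ((d₀ : ℝ) ^ D * (σ ^ 2 + (d₀ : ℝ)) ^ D * a i) ≤ effLoss d₀ σ v a c D b γ := by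
  have hd0 : (0:ℝ) < (d₀:ℝ) := by exact_mod_cast hd₀
  have hσd : (0:ℝ) < σ ^ 2 + (d₀:ℝ) := add_pos_of_nonneg_of_pos (sq_nonneg σ) hd0
  have hB : ∀ i, (0:ℝ) < (d₀:ℝ) ^ D * (σ ^ 2 + (d₀:ℝ)) ^ D * a i := fun i =>
    mul_pos (mul_pos (pow_pos hd0 D) (pow_pos hσd D)) (ha i)
  have hb2D : (0:ℝ) ≤ b ^ (2 * D) := by rw [pow_mul]; positivity
  have hsum : ∀ i : Fin n,
      (d₀ : ℝ) ^ (2 * D) * b ^ (2 * D) * (v i) ^ 2 /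
        ((d₀ : ℝ) ^ D * (σ ^ 2 + (d₀ : ℝ)) ^ D * a i * b ^ (2 * D) + γ)
      ≤ (d₀ : ℝ) ^ (2 * D) * (v i) ^ 2 / ((d₀ : ℝ) ^ D * (σ ^ 2 + (d₀ : ℝ)) ^ D * a i) := by
    intro i
    have hden : 0 < (d₀ : ℝ) ^ D * (σ ^ 2 + (d₀ : ℝ)) ^ D * a i * b ^ (2 * D) + γ :=
      add_pos_of_nonneg_of_pos (mul_nonneg (hB i).le hb2D) hγ
    rw [div_le_div_iff₀ hden (hB i)]
    have h1 : 0 ≤ (d₀ : ℝ) ^ (2 * D) * (v i) ^ 2 * γ := by positivity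
    nlinarith [h1]
  have hs := Finset.sum_le_sum (s := Finset.univ) (fun i _ => hsum i)
  have hlin : 0 ≤ γ * (D : ℝ) * (d₀ : ℝ) ^ 2 * b ^ 2 := by positivity
  unfold effLoss
  linarith

lemma effLoss_concave_pt (hd₀ : 0 < d₀) (ha : ∀ i, 0 < a i) (b : ℝ) {x y s t : ℝ}
    (hx : 0 < x) (hy : 0 < y) (hs : 0 ≤ s) (ht : 0 ≤ t) (hst : s + t = 1) :
    s * effLoss d₀ σ v a c D b x + t * effLoss d₀ σ v a c D b y
      ≤ effLoss d₀ σ v a c D b (s * x + t * y) := by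
  have hd0 : (0:ℝ) < (d₀:ℝ) := by exact_mod_cast hd₀
  have hb2D : (0:ℝ) ≤ b ^ (2 * D) := by rw [pow_mul]; positivity
  have hσd : (0:ℝ) < σ ^ 2 + (d₀:ℝ) := add_pos_of_nonneg_of_pos (sq_nonneg σ) hd0
  have hKP : ∀ i, (0:ℝ) ≤ (d₀ : ℝ) ^ D * (σ ^ 2 + (d₀ : ℝ)) ^ D * a i * b ^ (2 * D) :=
    fun i => mul_nonneg (mul_nonneg (mul_nonneg (pow_pos hd0 D).le (pow_pos hσd D).le)
      (ha i).le) hb2D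
  have key : ∀ i : Fin n,
      (d₀ : ℝ) ^ (2 * D) * b ^ (2 * D) * (v i) ^ 2 /
        ((d₀ : ℝ) ^ D * (σ ^ 2 + (d₀ : ℝ)) ^ D * a i * b ^ (2 * D) + (s * x + t * y))
      ≤ s * ((d₀ : ℝ) ^ (2 * D) * b ^ (2 * D) * (v i) ^ 2 /
          ((d₀ : ℝ) ^ D * (σ ^ 2 + (d₀ : ℝ)) ^ D * a i * b ^ (2 * D) + x))
        + t * ((d₀ : ℝ) ^ (2 * D) * b ^ (2 * D) * (v i) ^ 2 /
          ((d₀ : ℝ) ^ D * (σ ^ 2 + (d₀ : ℝ)) ^ D * a i * b ^ (2 * D) + y)) := by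
    intro i
    have hA : (0:ℝ) ≤ (d₀ : ℝ) ^ (2 * D) * b ^ (2 * D) * (v i) ^ 2 := by
      have h2 : (0:ℝ) ≤ (d₀:ℝ) ^ (2*D) := by positivity
      exact mul_nonneg (mul_nonneg h2 hb2D) (sq_nonneg _)
    have heq : (d₀ : ℝ) ^ D * (σ ^ 2 + (d₀ : ℝ)) ^ D * a i * b ^ (2 * D) + (s * x + t * y)
        = s * ((d₀ : ℝ) ^ D * (σ ^ 2 + (d₀ : ℝ)) ^ D * a i * b ^ (2 * D) + x)
          + t * ((d₀ : ℝ) ^ D * (σ ^ 2 + (d₀ : ℝ)) ^ D * a i * b ^ (2 * D) + y) := by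
      linear_combination (-((d₀ : ℝ) ^ D * (σ ^ 2 + (d₀ : ℝ)) ^ D * a i * b ^ (2 * D))) * hst
    rw [heq]
    exact harm_ineq _ _ _ _ _ hA (by linarith [hKP i]) (by linarith [hKP i]) hs ht hst
  have hsum := Finset.sum_le_sum (s := Finset.univ) (fun i _ => key i)
  rw [Finset.sum_add_distrib, ← Finset.mul_sum, ← Finset.mul_sum] at hsum
  have expand : s * effLoss d₀ σ v a c D b x + t * effLoss d₀ σ v a c D b y
      = -(s * ∑ i, (d₀ : ℝ) ^ (2 * D) * b ^ (2 * D) * (v i) ^ 2 /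
            ((d₀ : ℝ) ^ D * (σ ^ 2 + (d₀ : ℝ)) ^ D * a i * b ^ (2 * D) + x)
          + t * ∑ i, (d₀ : ℝ) ^ (2 * D) * b ^ (2 * D) * (v i) ^ 2 /
            ((d₀ : ℝ) ^ D * (σ ^ 2 + (d₀ : ℝ)) ^ D * a i * b ^ (2 * D) + y))
        + c + (s * x + t * y) * (D : ℝ) * (d₀ : ℝ) ^ 2 * b ^ 2 := by
    unfold effLoss
    linear_combination c * hst
  rw [expand]
  unfold effLoss
  linarith

lemma effLoss_bddBelow (hd₀ : 0 < d₀) (ha : ∀ i, 0 < a i) (γ : ℝ) (hγ : 0 < γ) :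
    BddBelow (Set.range fun b => effLoss d₀ σ v a c D b γ) := by
  refine ⟨c - ∑ i, (d₀ : ℝ) ^ (2 * D) * (v i) ^ 2 /
      ((d₀ : ℝ) ^ D * (σ ^ 2 + (d₀ : ℝ)) ^ D * a i), ?_⟩
  rintro z ⟨b, rfl⟩
  exact effLoss_lower d₀ σ v a c D hd₀ ha b γ hγ

end

set_option maxHeartbeats 1000000 in
/-- for D ≥ 2, at the critical γ* the optimal loss L_D is concave on
(0, ∞), has one-sided derivatives at γ*, with right derivative 0 and left derivative at
least D (γ*/‖v‖)^{2/(D−1)} > 0; hence L_D is not differentiable at γ*: a first-order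
phase transition. -/
theorem deep_first_order_transition {n : ℕ} (d₀ : ℕ) (hd₀ : 0 < d₀) (σ : ℝ) (hσ : 0 ≤ σ)
    (v a : Fin n → ℝ) (hv : v ≠ 0) (ha : ∀ i, 0 < a i) (c : ℝ)
    (D : ℕ) (hD : 2 ≤ D) (γstar : ℝ) (hγstar : 0 < γstar)
    (hfeat : ∀ γ : ℝ, 0 < γ → γ < γstar → (⨅ b : ℝ, effLoss d₀ σ v a c D b γ) < c)
    (htriv : ∀ γ : ℝ, γstar ≤ γ → (⨅ b : ℝ, effLoss d₀ σ v a c D b γ) = c) :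
    ConcaveOn ℝ (Set.Ioi 0) (fun γ : ℝ => ⨅ b : ℝ, effLoss d₀ σ v a c D b γ) ∧
    HasDerivWithinAt (fun γ : ℝ => ⨅ b : ℝ, effLoss d₀ σ v a c D b γ) 0
      (Set.Ici γstar) γstar ∧
    (∃ dL : ℝ,
      HasDerivWithinAt (fun γ : ℝ => ⨅ b : ℝ, effLoss d₀ σ v a c D b γ) dL
        (Set.Iic γstar) γstar ∧
      (D : ℝ) * (γstar / Real.sqrt (∑ i, (v i) ^ 2)) ^ ((2 : ℝ) / ((D : ℝ) - 1)) ≤ dL) ∧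
    0 < (D : ℝ) * (γstar / Real.sqrt (∑ i, (v i) ^ 2)) ^ ((2 : ℝ) / ((D : ℝ) - 1)) ∧
    ¬ DifferentiableAt ℝ (fun γ : ℝ => ⨅ b : ℝ, effLoss d₀ σ v a c D b γ) γstar := by
  have hd0 : (0:ℝ) < (d₀:ℝ) := by exact_mod_cast hd₀
  have hD1 : (2:ℝ) ≤ (D:ℝ) := by exact_mod_cast hD
  have hDpos : (0:ℝ) < (D:ℝ) := by linarith
  -- the norm of v
  obtain ⟨i0, hi0⟩ : ∃ i, v i ≠ 0 := by
    by_contra h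
    push_neg at h
    exact hv (funext h)
  have hV : (0:ℝ) < ∑ i, (v i) ^ 2 :=
    Finset.sum_pos' (fun i _ => sq_nonneg (v i)) ⟨i0, Finset.mem_univ _, by positivity⟩
  set V : ℝ := ∑ i, (v i) ^ 2 with hVdef
  set nv : ℝ := Real.sqrt V with hnvdef
  have hnv : 0 < nv := Real.sqrt_pos.2 hV
  have hnv2 : nv ^ 2 = V := Real.sq_sqrt hV.le
  set e : ℝ := (2 : ℝ) / ((D : ℝ) - 1) with hedef
  have hm : (0:ℝ) < (D:ℝ) - 1 := by linarith
  have he : 0 < e := div_pos two_pos hm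
  set β : ℝ := (D : ℝ) * (γstar / nv) ^ e with hβdef
  have hβ : 0 < β := mul_pos hDpos (Real.rpow_pos_of_pos (div_pos hγstar hnv) e)
  set L : ℝ → ℝ := fun γ : ℝ => ⨅ b : ℝ, effLoss d₀ σ v a c D b γ with hLdef
  have hLγ : ∀ γ : ℝ, L γ = ⨅ b : ℝ, effLoss d₀ σ v a c D b γ := fun γ => rfl
  -- concavity
  have hconc : ConcaveOn ℝ (Set.Ioi 0) L := by
    refine ⟨convex_Ioi 0, fun x hx y hy s t hs ht hst => ?_⟩
    simp only [smul_eq_mul]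
    rw [hLγ]
    refine le_ciInf fun b => ?_
    have h1 : L x ≤ effLoss d₀ σ v a c D b x := ciInf_le (effLoss_bddBelow d₀ σ v a c D hd₀ ha x hx) b
    have h2 : L y ≤ effLoss d₀ σ v a c D b y := ciInf_le (effLoss_bddBelow d₀ σ v a c D hd₀ ha y hy) b
    calc s * L x + t * L y
        ≤ s * effLoss d₀ σ v a c D b x + t * effLoss d₀ σ v a c D b y :=
          add_le_add (mul_le_mul_of_nonneg_left h1 hs) (mul_le_mul_of_nonneg_left h2 ht)
      _ ≤ effLoss d₀ σ v a c D b (s * x + t * y) :=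
          effLoss_concave_pt d₀ σ v a c D hd₀ ha b hx hy hs ht hst
  have hLs : L γstar = c := htriv γstar le_rfl
  -- quantitative key step
  have key' : ∀ γ γ' : ℝ, 0 < γ → γ < γ' → γ' < γstar →
      L γ ≤ c - (γ' - γ) * ((D : ℝ) * (γ' / nv) ^ e) := by
    intro γ γ' hγ hγγ' hγ's
    have hγ' : 0 < γ' := lt_trans hγ hγγ'
    obtain ⟨b, hb⟩ := exists_lt_of_ciInf_lt (hfeat γ' hγ' hγ's)
    have hσd : (0:ℝ) < σ ^ 2 + (d₀:ℝ) := add_pos_of_nonneg_of_pos (sq_nonneg σ) hd0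
    have hb2D : (0:ℝ) ≤ b ^ (2 * D) := by rw [pow_mul]; positivity
    have hKP : ∀ i, (0:ℝ) ≤ (d₀ : ℝ) ^ D * (σ ^ 2 + (d₀ : ℝ)) ^ D * a i * b ^ (2 * D) :=
      fun i => mul_nonneg (mul_nonneg (mul_nonneg (pow_pos hd0 D).le (pow_pos hσd D).le)
        (ha i).le) hb2D
    have hA : ∀ i : Fin n, (0:ℝ) ≤ (d₀ : ℝ) ^ (2 * D) * b ^ (2 * D) * (v i) ^ 2 := by
      intro i
      have h2 : (0:ℝ) ≤ (d₀:ℝ) ^ (2*D) := by positivity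
      exact mul_nonneg (mul_nonneg h2 hb2D) (sq_nonneg _)
    -- from hb : effLoss ... b γ' < c, extract the sum bound
    have hS : γ' * (D:ℝ) * (d₀:ℝ)^2 * b^2 <
        ∑ i, (d₀ : ℝ) ^ (2 * D) * b ^ (2 * D) * (v i) ^ 2 /
          ((d₀ : ℝ) ^ D * (σ ^ 2 + (d₀ : ℝ)) ^ D * a i * b ^ (2 * D) + γ') := by
      unfold effLoss at hb
      linarith
    have hS2 : ∑ i, (d₀ : ℝ) ^ (2 * D) * b ^ (2 * D) * (v i) ^ 2 /
          ((d₀ : ℝ) ^ D * (σ ^ 2 + (d₀ : ℝ)) ^ D * a i * b ^ (2 * D) + γ')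
        ≤ ∑ i, (d₀ : ℝ) ^ (2 * D) * b ^ (2 * D) * (v i) ^ 2 / γ' := by
      refine Finset.sum_le_sum fun i _ => ?_
      exact div_le_div_of_nonneg_left (hA i) hγ' (by linarith [hKP i])
    have hsumeq : ∑ i, (d₀ : ℝ) ^ (2 * D) * b ^ (2 * D) * (v i) ^ 2 / γ'
        = (d₀ : ℝ) ^ (2 * D) * b ^ (2 * D) * V / γ' := by
      rw [hVdef, ← Finset.sum_div, ← Finset.mul_sum]
    have hKV : γ' * (D:ℝ) * (d₀:ℝ)^2 * b^2 < (d₀ : ℝ) ^ (2 * D) * b ^ (2 * D) * V / γ' := by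
      rw [← hsumeq]; linarith
    have h3 : γ'^2 * (D:ℝ) * ((d₀:ℝ)^2 * b^2) < (d₀ : ℝ) ^ (2 * D) * b ^ (2 * D) * V := by
      rw [lt_div_iff₀ hγ'] at hKV
      nlinarith [hKV]
    have hbne : b ≠ 0 := by
      rintro rfl
      rw [zero_pow (by omega : 2 * D ≠ 0), zero_pow (by omega : 2 ≠ 0)] at h3
      simp at h3
    set X : ℝ := ((d₀:ℝ) * b) ^ 2 with hXdef
    have hX : 0 < X := by positivity
    have hXD : (d₀ : ℝ) ^ (2 * D) * b ^ (2 * D) = X ^ D := by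
      rw [hXdef, ← pow_mul, mul_pow]
    have hX2 : (d₀:ℝ)^2 * b^2 = X := (mul_pow _ _ 2).symm
    have h4 : γ'^2 * (D:ℝ) * X < X ^ (D - 1) * X * V := by
      have hpow : X ^ D = X ^ (D-1) * X := by
        rw [← pow_succ, Nat.sub_add_cancel (by omega : 1 ≤ D)]
      rw [hXD, hpow, hX2] at h3
      exact h3
    have h5' : γ'^2 * (D:ℝ) < X ^ (D-1) * V := by
      apply lt_of_mul_lt_mul_right _ hX.le
      calc γ'^2 * (D:ℝ) * X < X ^ (D - 1) * X * V := h4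
        _ = X ^ (D-1) * V * X := by ring
    have h5 : γ'^2 < X ^ (D-1) * V := by nlinarith [sq_nonneg γ']
    -- the rpow bound
    have hgnn : (0:ℝ) ≤ γ' / nv := (div_pos hγ' hnv).le
    have hE : ((γ' / nv) ^ e) ^ (D - 1) = γ'^2 / V := by
      rw [← Real.rpow_natCast ((γ' / nv) ^ e) (D - 1), ← Real.rpow_mul hgnn]
      have hmcast : ((D - 1 : ℕ) : ℝ) = (D:ℝ) - 1 := by
        rw [Nat.cast_sub (by omega : 1 ≤ D)]; norm_num
      rw [hmcast, hedef, div_mul_cancel₀ _ (ne_of_gt hm)]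
      rw [show (2:ℝ) = ((2:ℕ):ℝ) by norm_num, Real.rpow_natCast, div_pow, hnv2]
    have hEX : (γ' / nv) ^ e < X := by
      refine lt_of_pow_lt_pow_left₀ (D-1) hX.le ?_
      rw [hE]
      exact (div_lt_iff₀ hV).2 h5
    -- monotone step from γ' down to γ
    have hstep : effLoss d₀ σ v a c D b γ ≤ effLoss d₀ σ v a c D b γ'
        - (γ' - γ) * ((D:ℝ) * (d₀:ℝ)^2 * b^2) := by
      have hmono : ∑ i, (d₀ : ℝ) ^ (2 * D) * b ^ (2 * D) * (v i) ^ 2 /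
            ((d₀ : ℝ) ^ D * (σ ^ 2 + (d₀ : ℝ)) ^ D * a i * b ^ (2 * D) + γ')
          ≤ ∑ i, (d₀ : ℝ) ^ (2 * D) * b ^ (2 * D) * (v i) ^ 2 /
            ((d₀ : ℝ) ^ D * (σ ^ 2 + (d₀ : ℝ)) ^ D * a i * b ^ (2 * D) + γ) := by
        refine Finset.sum_le_sum fun i _ => ?_
        exact div_le_div_of_nonneg_left (hA i) (by linarith [hKP i]) (by linarith)
      unfold effLoss
      linarith
    have hL1 : L γ ≤ effLoss d₀ σ v a c D b γ :=
      ciInf_le (effLoss_bddBelow d₀ σ v a c D hd₀ ha γ hγ) b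
    have hfin : (γ' - γ) * ((D:ℝ) * (γ' / nv) ^ e) ≤ (γ' - γ) * ((D:ℝ) * (d₀:ℝ)^2 * b^2) := by
      apply mul_le_mul_of_nonneg_left _ (by linarith : (0:ℝ) ≤ γ' - γ)
      calc (D:ℝ) * (γ' / nv) ^ e ≤ (D:ℝ) * X := mul_le_mul_of_nonneg_left hEX.le hDpos.le
        _ = (D:ℝ) * (d₀:ℝ)^2 * b^2 := by rw [← hX2]; ring
    linarith
  -- limit as γ' → γstar
  have key : ∀ γ : ℝ, 0 < γ → γ < γstar → L γ ≤ c - (γstar - γ) * β := by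
    intro γ hγ hγs
    have h1 : ContinuousAt (fun γ' : ℝ => (γ' / nv) ^ e) γstar :=
      (continuousAt_id.div_const nv).rpow_const (Or.inr he.le)
    have hF : ContinuousAt (fun γ' : ℝ => c - (γ' - γ) * ((D:ℝ) * (γ' / nv) ^ e)) γstar :=
      continuousAt_const.sub ((continuousAt_id.sub continuousAt_const).mul
        (continuousAt_const.mul h1))
    have htd : Filter.Tendsto (fun γ' : ℝ => c - (γ' - γ) * ((D:ℝ) * (γ' / nv) ^ e))
        (nhdsWithin γstar (Set.Iio γstar))
        (nhds (c - (γstar - γ) * ((D:ℝ) * (γstar / nv) ^ e))) :=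
      (hF.continuousWithinAt).tendsto
    have hev : ∀ᶠ γ' in nhdsWithin γstar (Set.Iio γstar),
        L γ ≤ c - (γ' - γ) * ((D:ℝ) * (γ' / nv) ^ e) :=
      Filter.eventually_of_mem (Ioo_mem_nhdsLT_of_mem ⟨hγs, le_rfl⟩)
        (fun γ' hγ' => key' γ γ' hγ hγ'.1 hγ'.2)
    exact ge_of_tendsto htd hev
  -- slope bounds
  have hslope : ∀ γ ∈ Set.Ioo (0:ℝ) γstar, β ≤ slope L γstar γ := by
    intro γ hγ
    have hkey := key γ hγ.1 hγ.2
    have hlt : γ - γstar < 0 := by linarith [hγ.2]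
    rw [slope_def_field, hLs, le_div_iff_of_neg hlt]
    nlinarith [hkey]
  have hanti : AntitoneOn (slope L γstar) (Set.Ioo 0 γstar) := by
    intro x hx y hy hxy
    have hsec := (hconc.neg).secant_mono (Set.mem_Ioi.2 hγstar) (Set.mem_Ioi.2 hx.1)
      (Set.mem_Ioi.2 hy.1) (ne_of_lt hx.2) (ne_of_lt hy.2) hxy
    simp only [Pi.neg_apply] at hsec
    rw [slope_def_field, slope_def_field]
    have hx' : (-(L x) - -(L γstar)) / (x - γstar) = -((L x - L γstar) / (x - γstar)) := by
      ring
    have hy' : (-(L y) - -(L γstar)) / (y - γstar) = -((L y - L γstar) / (y - γstar)) := by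
      ring
    rw [hx', hy'] at hsec
    linarith
  have hne : (Set.Ioo (0:ℝ) γstar).Nonempty := ⟨γstar/2, by constructor <;> linarith⟩
  have hbddS : BddBelow (slope L γstar '' Set.Ioo 0 γstar) := by
    refine ⟨β, ?_⟩
    rintro z ⟨γ, hγ, rfl⟩
    exact hslope γ hγ
  set dL : ℝ := sInf (slope L γstar '' Set.Ioo 0 γstar) with hdLdef
  have htendS : Filter.Tendsto (slope L γstar) (nhdsWithin γstar (Set.Iio γstar)) (nhds dL) :=
    hanti.tendsto_nhdsWithin_Ioo_left hne hbddS
  have hld : HasDerivWithinAt L dL (Set.Iic γstar) γstar := by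
    rw [hasDerivWithinAt_iff_tendsto_slope, Set.Iic_diff_right]
    exact htendS
  have hdLβ : β ≤ dL := by
    refine le_csInf (hne.image _) ?_
    rintro z ⟨γ, hγ, rfl⟩
    exact hslope γ hγ
  have hrd : HasDerivWithinAt L 0 (Set.Ici γstar) γstar :=
    (hasDerivWithinAt_const γstar (Set.Ici γstar) c).congr
      (fun y hy => htriv y hy) (htriv γstar le_rfl)
  refine ⟨hconc, hrd, ⟨dL, hld, hdLβ⟩, hβ, ?_⟩
  intro hdiff
  have h1 := (hdiff.hasDerivAt.hasDerivWithinAt (s := Set.Ici γstar)).derivWithin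
    (uniqueDiffOn_Ici γstar γstar Set.self_mem_Ici)
  have h2 := hrd.derivWithin (uniqueDiffOn_Ici γstar γstar Set.self_mem_Ici)
  have h3 := (hdiff.hasDerivAt.hasDerivWithinAt (s := Set.Iic γstar)).derivWithin
    (uniqueDiffOn_Iic γstar γstar Set.self_mem_Iic)
  have h4 := hld.derivWithin (uniqueDiffOn_Iic γstar γstar Set.self_mem_Iic)
  rw [h2] at h1
  rw [h4] at h3
  rw [← h3] at h1
  linarith
end

section
/- Fix γ > 0, σ > 0, and suppose a_i > 0 for every i. Then there exists D₀ such that for every integer D ≥ D₀ and every b ≠ 0, one has ℓ̄_D(b, γ) > c; consequently L_D(γ) = c for all D ≥ D₀, and lim_{D→∞} L_D(γ) = c. In the deep linear network interpretation c = E[y²], so in the infinite-depth limit the optimal loss at any positive regularization strength equals the trivial value E[y²]. -/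
/-- for fixed γ > 0 and σ > 0, there is a depth D₀ beyond which every
b ≠ 0 has ℓ̄_D(b, γ) > c, hence L_D(γ) = c for all D ≥ D₀ and L_D(γ) → c as D → ∞:
the infinite-depth optimal loss at positive regularization is the trivial value E[y²]. -/
theorem infinite_depth_trivial {n : ℕ} (d₀ : ℕ) (hd₀ : 0 < d₀) (σ : ℝ) (hσ : 0 < σ)
    (v a : Fin n → ℝ) (ha : ∀ i, 0 < a i) (c : ℝ) (γ : ℝ) (hγ : 0 < γ) :
    ∃ D₀ : ℕ,
      (∀ D : ℕ, D₀ ≤ D → ∀ b : ℝ, b ≠ 0 → c < effLoss d₀ σ v a c D b γ) ∧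
      (∀ D : ℕ, D₀ ≤ D → (⨅ b : ℝ, effLoss d₀ σ v a c D b γ) = c) ∧
      Filter.Tendsto (fun D : ℕ => ⨅ b : ℝ, effLoss d₀ σ v a c D b γ)
        Filter.atTop (nhds c) := by
  have hd₀' : (0:ℝ) < d₀ := by exact_mod_cast hd₀
  have hσd : (0:ℝ) < σ ^ 2 + d₀ := by positivity
  set r : ℝ := (d₀ : ℝ) / (σ ^ 2 + d₀) with hrdef
  have hr0 : 0 ≤ r := by positivity
  have hr1 : r < 1 := by
    rw [hrdef, div_lt_one hσd]; nlinarith [hσ]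
  set S1 : ℝ := ∑ i, (v i) ^ 2 with hS1def
  set S2 : ℝ := ∑ i, (v i) ^ 2 / a i with hS2def
  have hS1 : 0 ≤ S1 := Finset.sum_nonneg fun i _ => sq_nonneg _
  have hS2 : 0 ≤ S2 := Finset.sum_nonneg fun i _ => by
    have := ha i; positivity
  -- choose D₁ so that r^D * S2 < γ for D ≥ D₁
  have h0 : Filter.Tendsto (fun D : ℕ => r ^ D * S2) Filter.atTop (nhds 0) := by
    simpa using (tendsto_pow_atTop_nhds_zero_of_lt_one hr0 hr1).mul_const S2
  have h1 : ∀ᶠ D in Filter.atTop, r ^ D * S2 < γ :=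
    h0.eventually (eventually_lt_nhds hγ)
  obtain ⟨D₁, hD₁⟩ := Filter.eventually_atTop.mp h1
  -- choose D₂ so that S1 < D₂ * γ²
  obtain ⟨D₂, hD₂⟩ := exists_nat_gt (S1 / γ ^ 2)
  have hD₂' : S1 < (D₂ : ℝ) * γ ^ 2 := by
    rw [div_lt_iff₀ (by positivity)] at hD₂; linarith
  set D₀ : ℕ := max D₁ (max D₂ 1) with hD₀def
  -- main strict inequality
  have hstrict : ∀ D : ℕ, D₀ ≤ D → ∀ b : ℝ, b ≠ 0 → c < effLoss d₀ σ v a c D b γ := by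
    intro D hD b hb
    have hD1 : D₁ ≤ D := le_trans (le_max_left _ _) hD
    have hDD2 : D₂ ≤ D := le_trans (le_trans (le_max_left _ _) (le_max_right _ _)) hD
    have hDge1 : 1 ≤ D := le_trans (le_trans (le_max_right _ _) (le_max_right _ _)) hD
    have hb2 : (0:ℝ) < b ^ 2 := by positivity
    set t : ℝ := (d₀ : ℝ) ^ 2 * b ^ 2 with htdef
    have ht : 0 < t := by positivity
    have hnum : ∀ i : Fin n,
        (d₀ : ℝ) ^ (2 * D) * b ^ (2 * D) * (v i) ^ 2 = t ^ D * (v i) ^ 2 := by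
      intro i
      rw [htdef, mul_pow, pow_mul, pow_mul]
    have hbpow : b ^ (2 * D) = (b ^ 2) ^ D := by rw [pow_mul]
    have hbpos : 0 < (b ^ 2) ^ D := by positivity
    -- the key sum bound
    have key : (∑ i, (d₀ : ℝ) ^ (2 * D) * b ^ (2 * D) * (v i) ^ 2 /
        ((d₀ : ℝ) ^ D * (σ ^ 2 + (d₀:ℝ)) ^ D * a i * b ^ (2 * D) + γ))
        < γ * D * t := by
      rcases le_or_gt t 1 with hle | hgt
      · -- small t case
        have hbound : ∀ i : Fin n,
            (d₀ : ℝ) ^ (2 * D) * b ^ (2 * D) * (v i) ^ 2 /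
              ((d₀ : ℝ) ^ D * (σ ^ 2 + (d₀:ℝ)) ^ D * a i * b ^ (2 * D) + γ)
              ≤ t ^ D * (v i) ^ 2 / γ := by
          intro i
          rw [hnum i]
          apply div_le_div_of_nonneg_left (by positivity) hγ
          have h1 : 0 ≤ (d₀ : ℝ) ^ D * (σ ^ 2 + (d₀:ℝ)) ^ D * a i * b ^ (2 * D) := by
            rw [hbpow]; have := ha i; positivity
          linarith
        calc (∑ i, (d₀ : ℝ) ^ (2 * D) * b ^ (2 * D) * (v i) ^ 2 /
              ((d₀ : ℝ) ^ D * (σ ^ 2 + (d₀:ℝ)) ^ D * a i * b ^ (2 * D) + γ))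
            ≤ ∑ i, t ^ D * (v i) ^ 2 / γ := Finset.sum_le_sum fun i _ => hbound i
          _ = t ^ D * S1 / γ := by
              rw [hS1def, Finset.mul_sum, Finset.sum_div]
          _ ≤ t * S1 / γ := by
              apply div_le_div_of_nonneg_right ?_ hγ.le
              have h2 : t ^ D ≤ t ^ 1 := pow_le_pow_of_le_one ht.le hle hDge1
              rw [pow_one] at h2
              nlinarith
          _ < γ * D * t := by
              rw [div_lt_iff₀ hγ]
              have hDge : (D₂ : ℝ) ≤ (D : ℝ) := by exact_mod_cast hDD2
              have hSD : S1 < (D : ℝ) * γ ^ 2 := by nlinarith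
              nlinarith [mul_lt_mul_of_pos_left hSD ht]
      · -- large t case
        have hbound : ∀ i : Fin n,
            (d₀ : ℝ) ^ (2 * D) * b ^ (2 * D) * (v i) ^ 2 /
              ((d₀ : ℝ) ^ D * (σ ^ 2 + (d₀:ℝ)) ^ D * a i * b ^ (2 * D) + γ)
              ≤ r ^ D * ((v i) ^ 2 / a i) := by
          intro i
          have hai := ha i
          have hP : 0 < (d₀ : ℝ) ^ D * (σ ^ 2 + (d₀:ℝ)) ^ D * a i * b ^ (2 * D) := by
            rw [hbpow]; positivity
          have step1 : (d₀ : ℝ) ^ (2 * D) * b ^ (2 * D) * (v i) ^ 2 /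
              ((d₀ : ℝ) ^ D * (σ ^ 2 + (d₀:ℝ)) ^ D * a i * b ^ (2 * D) + γ)
              ≤ (d₀ : ℝ) ^ (2 * D) * b ^ (2 * D) * (v i) ^ 2 /
              ((d₀ : ℝ) ^ D * (σ ^ 2 + (d₀:ℝ)) ^ D * a i * b ^ (2 * D)) := by
            apply div_le_div_of_nonneg_left ?_ hP (by linarith)
            rw [hbpow]; positivity
          have step2 : (d₀ : ℝ) ^ (2 * D) * b ^ (2 * D) * (v i) ^ 2 /
              ((d₀ : ℝ) ^ D * (σ ^ 2 + (d₀:ℝ)) ^ D * a i * b ^ (2 * D))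
              = r ^ D * ((v i) ^ 2 / a i) := by
            rw [hrdef, div_pow, hbpow, two_mul, pow_add]
            field_simp
          rw [step2] at step1
          exact step1
        calc (∑ i, (d₀ : ℝ) ^ (2 * D) * b ^ (2 * D) * (v i) ^ 2 /
              ((d₀ : ℝ) ^ D * (σ ^ 2 + (d₀:ℝ)) ^ D * a i * b ^ (2 * D) + γ))
            ≤ ∑ i, r ^ D * ((v i) ^ 2 / a i) := Finset.sum_le_sum fun i _ => hbound i
          _ = r ^ D * S2 := by rw [hS2def, Finset.mul_sum]
          _ < γ := hD₁ D hD1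
          _ ≤ γ * D * t := by
              have hDge : (1 : ℝ) ≤ (D : ℝ) := by exact_mod_cast hDge1
              have h1t : (1:ℝ) ≤ (D : ℝ) * t := by
                have := mul_le_mul hDge hgt.le zero_le_one
                  (le_trans zero_le_one hDge)
                simpa using this
              calc γ = γ * 1 := (mul_one γ).symm
                _ ≤ γ * ((D:ℝ) * t) := mul_le_mul_of_nonneg_left h1t hγ.le
                _ = γ * D * t := (mul_assoc γ _ _).symm
    -- conclude
    have hre : effLoss d₀ σ v a c D b γ - c =
        γ * D * t - (∑ i, (d₀ : ℝ) ^ (2 * D) * b ^ (2 * D) * (v i) ^ 2 /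
          ((d₀ : ℝ) ^ D * (σ ^ 2 + (d₀:ℝ)) ^ D * a i * b ^ (2 * D) + γ)) := by
      rw [effLoss, htdef]; ring
    linarith
  -- value at b = 0 is c (when D ≥ 1)
  have hzero : ∀ D : ℕ, D₀ ≤ D → effLoss d₀ σ v a c D 0 γ = c := by
    intro D hD
    have hDge1 : 1 ≤ D := le_trans (le_trans (le_max_right _ _) (le_max_right _ _)) hD
    have h2D : 2 * D ≠ 0 := by omega
    simp [effLoss, zero_pow h2D]
  -- infimum equals c
  have hinf : ∀ D : ℕ, D₀ ≤ D → (⨅ b : ℝ, effLoss d₀ σ v a c D b γ) = c := by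
    intro D hD
    have hlb : ∀ b : ℝ, c ≤ effLoss d₀ σ v a c D b γ := by
      intro b
      rcases eq_or_ne b 0 with rfl | hb
      · exact (hzero D hD).ge
      · exact (hstrict D hD b hb).le
    have hbdd : BddBelow (Set.range fun b : ℝ => effLoss d₀ σ v a c D b γ) := by
      refine ⟨c, ?_⟩
      rintro x ⟨b, rfl⟩
      exact hlb b
    refine le_antisymm ?_ (le_ciInf hlb)
    calc (⨅ b : ℝ, effLoss d₀ σ v a c D b γ) ≤ effLoss d₀ σ v a c D 0 γ :=
          ciInf_le hbdd 0
      _ = c := hzero D hD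
  refine ⟨D₀, hstrict, hinf, ?_⟩
  apply Filter.Tendsto.congr' ?_ (tendsto_const_nhds (x := c))
  filter_upwards [Filter.eventually_ge_atTop D₀] with D hD
  exact (hinf D hD).symm
end

section
/- Let A, B, C > 0 and let D ≥ 2 be an integer. For γ > 0 define f_γ(b) = A b^{2D+2} − B b^{D+1} + γ C b² for b ≥ 0. Then: (i) for every γ > 0, b = 0 is a strict local minimum of f_γ on [0, ∞); and (ii) there exists γ̄ > 0 such that for 0 < γ < γ̄ the infimum of f_γ over b ≥ 0 is negative and attained at some b > 0, while for γ > γ̄ one has f_γ(b) > 0 = f_γ(0) for all b > 0. Hence the mean-field deep-network loss with D ≥ 2 exhibits a first-order transition in γ. -/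
/-- for the mean-field deep-network loss f_γ(b) = A b^{2D+2} − B b^{D+1} + γ C b²
with A, B, C > 0 and D ≥ 2: (i) for every γ > 0, b = 0 is a strict local minimum of f_γ on
[0, ∞); (ii) there is γ̄ > 0 such that for 0 < γ < γ̄ the infimum of f_γ over b ≥ 0 is
negative and attained at some b > 0, while for γ > γ̄ one has f_γ(b) > 0 = f_γ(0) for all
b > 0: a first-order transition in γ. -/
theorem mean_field_first_order_transition (A B C : ℝ) (hA : 0 < A) (hB : 0 < B)
    (hC : 0 < C) (D : ℕ) (hD : 2 ≤ D) :
    (∀ γ : ℝ, 0 < γ → ∃ δ > 0, ∀ b : ℝ, 0 < b → b < δ →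
      0 < A * b ^ (2 * D + 2) - B * b ^ (D + 1) + γ * C * b ^ 2) ∧
    ∃ γbar : ℝ, 0 < γbar ∧
      (∀ γ : ℝ, 0 < γ → γ < γbar → ∃ b : ℝ, 0 < b ∧
        A * b ^ (2 * D + 2) - B * b ^ (D + 1) + γ * C * b ^ 2 < 0 ∧
        ∀ b' : ℝ, 0 ≤ b' →
          A * b ^ (2 * D + 2) - B * b ^ (D + 1) + γ * C * b ^ 2 ≤
            A * b' ^ (2 * D + 2) - B * b' ^ (D + 1) + γ * C * b' ^ 2) ∧
      (∀ γ : ℝ, γbar < γ → ∀ b : ℝ, 0 < b →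
        0 < A * b ^ (2 * D + 2) - B * b ^ (D + 1) + γ * C * b ^ 2) := by
  obtain ⟨d, rfl⟩ : ∃ d, D = d + 2 := ⟨D - 2, by omega⟩
  have hexp1 : 2 * (d + 2) + 2 = 2 * d + 6 := by ring
  have hexp2 : d + 2 + 1 = d + 3 := by ring
  simp only [hexp1, hexp2]
  -- the auxiliary function h and its factorization of f
  set h : ℝ → ℝ := fun b => B * b ^ (d + 1) - A * b ^ (2 * d + 4) with hh
  have hfact : ∀ (γ b : ℝ),
      A * b ^ (2 * d + 6) - B * b ^ (d + 3) + γ * C * b ^ 2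
        = b ^ 2 * (γ * C - h b) := by
    intro γ b; simp only [hh]; ring
  have hcont : Continuous h := by
    simp only [hh]; continuity
  have h0 : h 0 = 0 := by
    simp [hh, zero_pow (by omega : d + 1 ≠ 0), zero_pow (by omega : 2 * d + 4 ≠ 0)]
  set R : ℝ := max 1 (B / A) with hR
  have hR1 : (1 : ℝ) ≤ R := le_max_left _ _
  have hR0 : (0 : ℝ) < R := lt_of_lt_of_le one_pos hR1
  -- h b ≤ 0 for b ≥ R
  have hneg : ∀ b : ℝ, R ≤ b → h b ≤ 0 := by
    intro b hb
    have hb1 : (1 : ℝ) ≤ b := le_trans hR1 hb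
    have hb0 : (0 : ℝ) ≤ b := by linarith
    have hBA : B / A ≤ b := le_trans (le_max_right _ _) hb
    have hBab : B ≤ A * b := by
      rw [div_le_iff₀ hA] at hBA; linarith
    have h1 : b ^ (d + 1) * b ≤ b ^ (2 * d + 4) := by
      calc b ^ (d + 1) * b = b ^ (d + 2) := by ring
        _ ≤ b ^ (2 * d + 4) := pow_le_pow_right₀ hb1 (by omega)
    have h2 : (0 : ℝ) ≤ b ^ (d + 1) := pow_nonneg hb0 _
    have h3 : A * (b ^ (d + 1) * b) ≤ A * b ^ (2 * d + 4) :=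
      mul_le_mul_of_nonneg_left h1 hA.le
    have h4 : B * b ^ (d + 1) ≤ A * b * b ^ (d + 1) :=
      mul_le_mul_of_nonneg_right hBab h2
    simp only [hh]
    nlinarith
  -- maximize h on [0, R]
  obtain ⟨bs, hbsmem, hbsmax⟩ := (isCompact_Icc (a := (0:ℝ)) (b := R)).exists_isMaxOn
    (Set.nonempty_Icc.mpr hR0.le) hcont.continuousOn
  set M := h bs with hM
  have hMub : ∀ b : ℝ, 0 ≤ b → h b ≤ M := by
    intro b hb
    rcases le_or_gt b R with hbR | hbR
    · exact hbsmax ⟨hb, hbR⟩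
    · have h5 : h 0 ≤ M := hbsmax ⟨le_refl 0, hR0.le⟩
      have := hneg b hbR.le
      linarith [h0 ▸ h5]
  -- M > 0 via a small test point b₀
  have hMpos : 0 < M := by
    set b₀ : ℝ := min 1 (B / (2 * A)) with hb₀def
    have hb₀pos : 0 < b₀ := lt_min one_pos (by positivity)
    have hb₀1 : b₀ ≤ 1 := min_le_left _ _
    have hb₀2 : b₀ ≤ B / (2 * A) := min_le_right _ _
    have hpow : b₀ ^ (d + 3) ≤ b₀ := pow_le_of_le_one hb₀pos.le hb₀1 (by omega)
    have hAb : A * b₀ ^ (d + 3) ≤ B / 2 := by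
      have e : A * (B / (2 * A)) = B / 2 := by field_simp
      have h1 := mul_le_mul_of_nonneg_left hpow hA.le
      have h2 := mul_le_mul_of_nonneg_left hb₀2 hA.le
      linarith
    have hfb₀ : 0 < h b₀ := by
      have hp : 0 < b₀ ^ (d + 1) := pow_pos hb₀pos _
      have : h b₀ = b₀ ^ (d + 1) * (B - A * b₀ ^ (d + 3)) := by
        simp only [hh]; ring
      rw [this]
      apply mul_pos hp; linarith
    have : h b₀ ≤ M := hMub b₀ hb₀pos.le
    linarith
  have hbspos : 0 < bs := by
    rcases hbsmem.1.lt_or_eq with h' | h'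
    · exact h'
    · exfalso
      have : M = 0 := by rw [hM, ← h']; exact h0
      linarith
  refine ⟨?_, M / C, div_pos hMpos hC, ?_, ?_⟩
  · -- (i) strict local min at 0
    intro γ hγ
    refine ⟨min 1 (γ * C / B), lt_min one_pos (by positivity), ?_⟩
    intro b hb hbδ
    have hb1 : b < 1 := lt_of_lt_of_le hbδ (min_le_left _ _)
    have hb2 : b < γ * C / B := lt_of_lt_of_le hbδ (min_le_right _ _)
    have hpow : b ^ (d + 1) ≤ b := pow_le_of_le_one hb.le hb1.le (by omega)
    have key : B * b ^ (d + 1) < γ * C := by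
      have : B * b < γ * C := by
        rw [lt_div_iff₀ hB] at hb2; linarith
      nlinarith [mul_le_mul_of_nonneg_left hpow hB.le]
    rw [hfact]
    apply mul_pos (by positivity)
    have : h b < γ * C := by
      simp only [hh]
      nlinarith [pow_pos hb (2 * d + 4)]
    linarith
  · -- (ii) small γ: negative attained minimum
    intro γ hγ hγbar
    have hγCM : γ * C < M := (lt_div_iff₀ hC).mp hγbar
    set f : ℝ → ℝ := fun b =>
      A * b ^ (2 * d + 6) - B * b ^ (d + 3) + γ * C * b ^ 2 with hf
    have hfcont : Continuous f := by simp only [hf]; fun_prop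
    have hfbs : f bs < 0 := by
      simp only [hf]; rw [hfact]
      have : γ * C - M < 0 := by linarith
      rw [← hM]
      exact mul_neg_of_pos_of_neg (by positivity) this
    have hfR : ∀ b : ℝ, R ≤ b → 0 ≤ f b := by
      intro b hb
      simp only [hf]; rw [hfact]
      have h1 : h b ≤ 0 := hneg b hb
      have : 0 ≤ γ * C - h b := by nlinarith
      positivity
    obtain ⟨bm, hbmmem, hbmmin⟩ := (isCompact_Icc (a := (0:ℝ)) (b := R)).exists_isMinOn
      (Set.nonempty_Icc.mpr hR0.le) hfcont.continuousOn
    have hfbm : f bm ≤ f bs := hbmmin ⟨hbspos.le, hbsmem.2⟩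
    have hfbmneg : f bm < 0 := lt_of_le_of_lt hfbm hfbs
    have hbmpos : 0 < bm := by
      rcases hbmmem.1.lt_or_eq with h' | h'
      · exact h'
      · exfalso
        have hf0 : f 0 = 0 := by
          simp [hf, zero_pow (by omega : 2 * d + 6 ≠ 0),
            zero_pow (by omega : d + 3 ≠ 0)]
        have : f bm = 0 := by rw [← h']; exact hf0
        linarith
    refine ⟨bm, hbmpos, hfbmneg, ?_⟩
    intro b' hb'
    rcases le_or_gt b' R with hb'R | hb'R
    · exact hbmmin ⟨hb', hb'R⟩
    · have := hfR b' hb'R.le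
      show f bm ≤ f b'
      linarith
  · -- (ii) large γ: f positive on (0, ∞)
    intro γ hγ b hb
    have hMγ : M < γ * C := (div_lt_iff₀ hC).mp hγ
    rw [hfact]
    apply mul_pos (by positivity)
    have := hMub b hb.le
    linarith
end
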